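/- arXiv:1702.00244 — 2 statements merged into one kernel-verified Lean document; each statement's English description precedes it below -/
import Mathlib

section
/- Let ((S,T),(U,V)) be a twin cotorsion pair on an extriangulated category B, with σ^+: B̲ → B̲^+ the right adjoint of the inclusion B̲^+ ↪ B̲ and σ^-: B̲^- ← B̲ the left adjoint of the inclusion B̲^- ↪ B̲ (both existing by reflection/coreflection sequences). Then there is a natural isomorphism of functors η: σ^+ ∘ σ^- ≅ σ^- ∘ σ^+ from B̲ to the heart H̲. -/
namespace ExtriHearts

open CategoryTheory CategoryTheory.Limits Opposite

attribute [local instance] CategoryTheory.Limits.hasBinaryBiproducts_of_finite_biproducts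

universe v u v₂ u₂

section IdealQuotient

variable {D : Type u₂} [Category.{v₂} D] [Preadditive D]

/-- The subgroup of morphisms `X ⟶ Y` generated by those factoring through an object of `W`. -/
def wIdeal (W : Set D) (X Y : D) : AddSubgroup (X ⟶ Y) :=
  AddSubgroup.closure {f : X ⟶ Y | ∃ Z ∈ W, ∃ p : X ⟶ Z, ∃ q : Z ⟶ Y, f = p ≫ q}

/-- The hom relation on `D` identifying morphisms whose difference lies in the ideal
generated by morphisms factoring through an object of `W`.  (For an additively closed
subcategory `W` this is the usual relation "`f - g` factors through an object of `W`".) -/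
def wRel (W : Set D) : HomRel D := fun {X Y} f g => f - g ∈ wIdeal W X Y

lemma comp_left_mem_wIdeal (W : Set D) {X Y Z : D} (f : X ⟶ Y) {g : Y ⟶ Z}
    (hg : g ∈ wIdeal W Y Z) : f ≫ g ∈ wIdeal W X Z := by
  have hle : wIdeal W Y Z ≤ (wIdeal W X Z).comap (Preadditive.leftComp Z f) := by
    rw [wIdeal, AddSubgroup.closure_le]
    rintro g ⟨Z₀, hZ₀, p, q, rfl⟩
    exact AddSubgroup.subset_closure ⟨Z₀, hZ₀, f ≫ p, q, by
      simp [Preadditive.leftComp]⟩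
  simpa [Preadditive.leftComp] using hle hg

lemma comp_right_mem_wIdeal (W : Set D) {X Y Z : D} {f : X ⟶ Y} (g : Y ⟶ Z)
    (hf : f ∈ wIdeal W X Y) : f ≫ g ∈ wIdeal W X Z := by
  have hle : wIdeal W X Y ≤ (wIdeal W X Z).comap (Preadditive.rightComp X g) := by
    rw [wIdeal, AddSubgroup.closure_le]
    rintro f ⟨Z₀, hZ₀, p, q, rfl⟩
    exact AddSubgroup.subset_closure ⟨Z₀, hZ₀, p, q ≫ g, by
      simp [Preadditive.rightComp]⟩
  simpa [Preadditive.rightComp] using hle hf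

instance wRel_congruence (W : Set D) : Congruence (wRel W) where
  equivalence :=
    { refl := fun f => by
        show f - f ∈ wIdeal W _ _
        simp only [sub_self]
        exact zero_mem _
      symm := fun {f g} h => by
        have h' : f - g ∈ wIdeal W _ _ := h
        show g - f ∈ wIdeal W _ _
        simpa only [neg_sub] using neg_mem h'
      trans := fun {f g h} h₁ h₂ => by
        have h₁' : f - g ∈ wIdeal W _ _ := h₁
        have h₂' : g - h ∈ wIdeal W _ _ := h₂
        show f - h ∈ wIdeal W _ _
        simpa only [sub_add_sub_cancel] using add_mem h₁' h₂' }
  comp_left := fun {X Y Z} f {g g'} h => by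
    have h' : g - g' ∈ wIdeal W _ _ := h
    show f ≫ g - f ≫ g' ∈ wIdeal W _ _
    simpa only [← Preadditive.comp_sub] using comp_left_mem_wIdeal W f h'
  comp_right := fun {X Y Z} {f f'} g h => by
    have h' : f - f' ∈ wIdeal W _ _ := h
    show f ≫ g - f' ≫ g ∈ wIdeal W _ _
    simpa only [← Preadditive.sub_comp] using comp_right_mem_wIdeal W g h'

/-- The quotient of a preadditive category by (the ideal generated by) the morphisms factoring
through a class of objects `W`. -/
abbrev QuotCat (W : Set D) := CategoryTheory.Quotient (wRel W)

/-- The canonical quotient functor. -/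
abbrev toQuot (W : Set D) : D ⥤ QuotCat W := Quotient.functor _

instance quotCatPreadditive (W : Set D) : Preadditive (QuotCat W) :=
  Quotient.preadditive _ (fun X Y f₁ f₂ g₁ g₂ h₁ h₂ => by
    have h₁' : f₁ - f₂ ∈ wIdeal W X Y := h₁
    have h₂' : g₁ - g₂ ∈ wIdeal W X Y := h₂
    show f₁ + g₁ - (f₂ + g₂) ∈ wIdeal W X Y
    have heq : f₁ + g₁ - (f₂ + g₂) = f₁ - f₂ + (g₁ - g₂) := by abel
    rw [heq]
    exact add_mem h₁' h₂')

end IdealQuotient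

section ExtCat

/-- The data of an additive `Ab`-valued bifunctor together with a realization predicate:
`realize δ x y` means that the 3-term sequence `A --x--> X --y--> C` realizes the
`E`-extension `δ ∈ E(C,A)`, i.e. belongs to the equivalence class `s(δ)`. -/
structure PreExtStruct (B : Type u) [Category.{v} B] [Preadditive B] where
  /-- The additive bifunctor `E : Bᵒᵖ × B → Ab`. -/
  E : Bᵒᵖ ⥤ B ⥤ AddCommGrpCat.{v}

namespace PreExtStruct

variable {B : Type u} [Category.{v} B] [Preadditive B]

/-- The abelian group `E(C,A)` of `E`-extensions of `C` by `A`. -/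
abbrev Ext (σ : PreExtStruct B) (C A : B) : AddCommGrpCat.{v} := (σ.E.obj (op C)).obj A

/-- `a_* δ`, the pushforward of an `E`-extension along `a : A ⟶ A'`. -/
def push (σ : PreExtStruct B) {C A A' : B} (a : A ⟶ A') (δ : σ.Ext C A) : σ.Ext C A' :=
  (σ.E.obj (op C)).map a δ

/-- `c^* δ`, the pullback of an `E`-extension along `c : C' ⟶ C`. -/
def pull (σ : PreExtStruct B) {C' C A : B} (c : C' ⟶ C) (δ : σ.Ext C A) : σ.Ext C' A :=
  (σ.E.map c.op).app A δ

/-- The direct sum `δ ⊕ δ'` of two `E`-extensions, i.e. the element of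
`E(C ⊞ C', A ⊞ A')` corresponding to `(δ, 0, 0, δ')`. -/
noncomputable def sumExt (σ : PreExtStruct B) [HasBinaryBiproducts B] {C C' A A' : B}
    (δ : σ.Ext C A) (δ' : σ.Ext C' A') : σ.Ext (C ⊞ C') (A ⊞ A') :=
  σ.push biprod.inl (σ.pull biprod.fst δ) + σ.push biprod.inr (σ.pull biprod.snd δ')

end PreExtStruct

/-- An *extriangulated category* structure `(E, s)` on an additive category `B`, consisting of
an additive bifunctor `E : Bᵒᵖ × B → Ab` and an additive realization `s` of `E` (encoded by the
predicate `realize`), subject to the axioms (ET1), (ET2), (ET3), (ET3)ᵒᵖ, (ET4), (ET4)ᵒᵖ of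
Nakaoka–Palu. -/
structure ExtStruct (B : Type u) [Category.{v} B] [Preadditive B] [HasFiniteBiproducts B]
    extends PreExtStruct B where
  /-- (ET1) `E` is additive in the second variable. -/
  additive_fst : ∀ Cop : Bᵒᵖ, (E.obj Cop).Additive
  /-- (ET1) `E` is additive in the first variable. -/
  additive_snd : ∀ A : B, (E.flip.obj A).Additive
  /-- `realize δ x y` means the sequence `A --x--> X --y--> C` realizes `δ`, i.e. it belongs to
  the equivalence class `s(δ)`. -/
  realize : ∀ ⦃A C : B⦄, toPreExtStruct.Ext C A → ∀ ⦃X : B⦄, (A ⟶ X) → (X ⟶ C) → Prop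
  /-- Every `E`-extension is realized by some sequence. -/
  realize_ex : ∀ ⦃A C : B⦄ (δ : toPreExtStruct.Ext C A),
      ∃ (X : B) (x : A ⟶ X) (y : X ⟶ C), realize δ x y
  /-- `s(δ)` is closed under the equivalence of sequences. -/
  realize_iso : ∀ ⦃A C X X' : B⦄ (δ : toPreExtStruct.Ext C A) (x : A ⟶ X) (y : X ⟶ C)
      (b : X ≅ X'), realize δ x y → realize δ (x ≫ b.hom) (b.inv ≫ y)
  /-- Any two realizations of `δ` are equivalent sequences. -/
  realize_unique : ∀ ⦃A C X X' : B⦄ (δ : toPreExtStruct.Ext C A) (x : A ⟶ X) (y : X ⟶ C)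
      (x' : A ⟶ X') (y' : X' ⟶ C), realize δ x y → realize δ x' y' →
      ∃ b : X ≅ X', x ≫ b.hom = x' ∧ b.hom ≫ y' = y
  /-- (ET2)(∗) Any morphism of `E`-extensions is realized by a morphism of sequences. -/
  realize_map : ∀ ⦃A C A' C' X X' : B⦄ (δ : toPreExtStruct.Ext C A) (δ' : toPreExtStruct.Ext C' A')
      (x : A ⟶ X) (y : X ⟶ C) (x' : A' ⟶ X') (y' : X' ⟶ C') (a : A ⟶ A') (c : C ⟶ C'),
      realize δ x y → realize δ' x' y' →
      toPreExtStruct.push a δ = toPreExtStruct.pull c δ' →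
      ∃ b : X ⟶ X', x ≫ b = a ≫ x' ∧ y ≫ c = b ≫ y'
  /-- (ET2)(i) The split extension is realized by the split sequence. -/
  realize_zero : ∀ A C : B,
      realize (0 : toPreExtStruct.Ext C A) (biprod.inl : A ⟶ A ⊞ C) (biprod.snd : A ⊞ C ⟶ C)
  /-- (ET2)(ii) Realization is additive. -/
  realize_sum : ∀ ⦃A C A' C' X X' : B⦄ (δ : toPreExtStruct.Ext C A)
      (δ' : toPreExtStruct.Ext C' A') (x : A ⟶ X) (y : X ⟶ C) (x' : A' ⟶ X') (y' : X' ⟶ C'),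
      realize δ x y → realize δ' x' y' →
      realize (toPreExtStruct.sumExt δ δ') (biprod.map x x') (biprod.map y y')
  /-- (ET3) -/
  et3 : ∀ ⦃A C A' C' X X' : B⦄ (δ : toPreExtStruct.Ext C A) (δ' : toPreExtStruct.Ext C' A')
      (x : A ⟶ X) (y : X ⟶ C) (x' : A' ⟶ X') (y' : X' ⟶ C'),
      realize δ x y → realize δ' x' y' → ∀ (a : A ⟶ A') (b : X ⟶ X'), x ≫ b = a ≫ x' →
      ∃ c : C ⟶ C', toPreExtStruct.push a δ = toPreExtStruct.pull c δ' ∧ y ≫ c = b ≫ y'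
  /-- (ET3)ᵒᵖ -/
  et3op : ∀ ⦃A C A' C' X X' : B⦄ (δ : toPreExtStruct.Ext C A) (δ' : toPreExtStruct.Ext C' A')
      (x : A ⟶ X) (y : X ⟶ C) (x' : A' ⟶ X') (y' : X' ⟶ C'),
      realize δ x y → realize δ' x' y' → ∀ (b : X ⟶ X') (c : C ⟶ C'), y ≫ c = b ≫ y' →
      ∃ a : A ⟶ A', toPreExtStruct.push a δ = toPreExtStruct.pull c δ' ∧ x ≫ b = a ≫ x'
  /-- (ET4) -/
  et4 : ∀ ⦃A B₀ D C F : B⦄ (δ : toPreExtStruct.Ext D A) (f : A ⟶ B₀) (f' : B₀ ⟶ D)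
      (δ' : toPreExtStruct.Ext F B₀) (g : B₀ ⟶ C) (g' : C ⟶ F),
      realize δ f f' → realize δ' g g' →
      ∃ (E₀ : B) (d : D ⟶ E₀) (e : E₀ ⟶ F) (h' : C ⟶ E₀) (δ'' : toPreExtStruct.Ext E₀ A),
        g ≫ h' = f' ≫ d ∧ h' ≫ e = g' ∧
        realize δ'' (f ≫ g) h' ∧ realize (toPreExtStruct.push f' δ') d e ∧
        toPreExtStruct.pull d δ'' = δ ∧ toPreExtStruct.push f δ'' = toPreExtStruct.pull e δ'
  /-- (ET4)ᵒᵖ -/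
  et4op : ∀ ⦃F C B₀ D A : B⦄ (δ' : toPreExtStruct.Ext B₀ F) (s : F ⟶ C) (t : C ⟶ B₀)
      (δ : toPreExtStruct.Ext A D) (u : D ⟶ B₀) (v : B₀ ⟶ A),
      realize δ' s t → realize δ u v →
      ∃ (E₀ : B) (e : F ⟶ E₀) (d : E₀ ⟶ D) (m : E₀ ⟶ C) (δ'' : toPreExtStruct.Ext A E₀),
        m ≫ t = d ≫ u ∧ e ≫ m = s ∧
        realize δ'' m (t ≫ v) ∧ realize (toPreExtStruct.pull u δ') e d ∧
        toPreExtStruct.push d δ'' = δ ∧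
        toPreExtStruct.pull v δ'' = toPreExtStruct.push e δ'

namespace ExtStruct

variable {B : Type u} [Category.{v} B] [Preadditive B] [HasFiniteBiproducts B] (σ : ExtStruct B)

/-- A sequence `A --x--> X --y--> C` is a conflation if it realizes some `E`-extension. -/
def Conflation {A X C : B} (x : A ⟶ X) (y : X ⟶ C) : Prop :=
  ∃ δ : σ.Ext C A, σ.realize δ x y

/-- `Cone(D₁, D₂)`: objects `X` admitting a conflation `D₁ ↣ D₂ ↠ X`. -/
def Cone (D₁ D₂ : Set B) : Set B :=
  {X | ∃ (A Y : B) (f : A ⟶ Y) (g : Y ⟶ X), A ∈ D₁ ∧ Y ∈ D₂ ∧ σ.Conflation f g}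

/-- `CoCone(D₁, D₂)`: objects `X` admitting a conflation `X ↣ D₁ ↠ D₂`. -/
def CoCone (D₁ D₂ : Set B) : Set B :=
  {X | ∃ (Y C : B) (f : X ⟶ Y) (g : Y ⟶ C), Y ∈ D₁ ∧ C ∈ D₂ ∧ σ.Conflation f g}

/-- `D₁ ∗ D₂`: objects `X` admitting a conflation `D₁ ↣ X ↠ D₂`. -/
def star (D₁ D₂ : Set B) : Set B :=
  {X | ∃ (A C : B) (f : A ⟶ X) (g : X ⟶ C), A ∈ D₁ ∧ C ∈ D₂ ∧ σ.Conflation f g}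

/-- `add(D₁ ∗ D₂)`: direct summands of objects of `D₁ ∗ D₂`. -/
def addStar (D₁ D₂ : Set B) : Set B :=
  {X | ∃ Y ∈ σ.star D₁ D₂, ∃ (s : X ⟶ Y) (r : Y ⟶ X), s ≫ r = 𝟙 X}

/-- An object `P` is projective if `E(P, −) = 0`. -/
def IsProj (P : B) : Prop := ∀ (A : B) (δ : σ.Ext P A), δ = 0

/-- An object `I` is injective if `E(−, I) = 0`. -/
def IsInj (I : B) : Prop := ∀ (C : B) (δ : σ.Ext C I), δ = 0

/-- The class of projective objects. -/
def projs : Set B := {P | σ.IsProj P}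

/-- `B` has enough projectives: every object admits a deflation from a projective. -/
def EnoughProj : Prop :=
  ∀ X : B, ∃ (P K : B) (i : K ⟶ P) (p : P ⟶ X), σ.IsProj P ∧ σ.Conflation i p

/-- `B` has enough injectives: every object admits an inflation into an injective. -/
def EnoughInj : Prop :=
  ∀ X : B, ∃ (I C : B) (i : X ⟶ I) (p : I ⟶ C), σ.IsInj I ∧ σ.Conflation i p

end ExtStruct

/-- A full additive subcategory (given as a class of objects), closed under isomorphisms and
direct summands. -/
structure AddClosed {B : Type u} [Category.{v} B] [Preadditive B] [HasFiniteBiproducts B]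
    (U : Set B) : Prop where
  zero_mem : ∀ Z : B, IsZero Z → Z ∈ U
  biprod_mem : ∀ X Y : B, X ∈ U → Y ∈ U → (X ⊞ Y) ∈ U
  summand_mem : ∀ X Y : B, Y ∈ U → ∀ (s : X ⟶ Y) (r : Y ⟶ X), s ≫ r = 𝟙 X → X ∈ U

namespace ExtStruct

variable {B : Type u} [Category.{v} B] [Preadditive B] [HasFiniteBiproducts B] (σ : ExtStruct B)

/-- A (complete) cotorsion pair `(U, V)` on an extriangulated category. -/
structure IsCotorsionPair (U V : Set B) : Prop where
  addU : AddClosed U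
  addV : AddClosed V
  ext_vanish : ∀ ⦃X : B⦄, X ∈ U → ∀ ⦃Y : B⦄, Y ∈ V → ∀ δ : σ.Ext X Y, δ = 0
  resolve : ∀ X : B, ∃ (V₀ U₀ : B) (f : V₀ ⟶ U₀) (g : U₀ ⟶ X),
      V₀ ∈ V ∧ U₀ ∈ U ∧ σ.Conflation f g
  coresolve : ∀ X : B, ∃ (V₀ U₀ : B) (f : X ⟶ V₀) (g : V₀ ⟶ U₀),
      V₀ ∈ V ∧ U₀ ∈ U ∧ σ.Conflation f g

/-- A twin cotorsion pair `((S,T), (U,V))`. -/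
structure IsTwinCotorsionPair (S T U V : Set B) : Prop where
  fst : σ.IsCotorsionPair S T
  snd : σ.IsCotorsionPair U V
  ext_SV : ∀ ⦃X : B⦄, X ∈ S → ∀ ⦃Y : B⦄, Y ∈ V → ∀ δ : σ.Ext X Y, δ = 0

section Twin

variable (S T U V : Set B)

/-- `B⁺ = Cone(V, W)` for the core `W = T ∩ U` of a twin cotorsion pair. -/
def tPos : Set B := σ.Cone V (T ∩ U)

/-- `B⁻ = CoCone(W, S)` for the core `W = T ∩ U` of a twin cotorsion pair. -/
def tNeg : Set B := σ.CoCone (T ∩ U) S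

/-- The class of objects of the heart `H = B⁺ ∩ B⁻` of a twin cotorsion pair. -/
def tHeartSet : Set B := σ.tPos T U V ∩ σ.tNeg S T U

/-- The heart `H/W` of a twin cotorsion pair, as a full subcategory of the quotient
category `B/W`. -/
abbrev THeart := ObjectProperty.FullSubcategory (fun X : QuotCat (T ∩ U : Set B) => X.as ∈ σ.tHeartSet S T U V)


/-- A *reflection sequence* for `B₀`: a conflation `B₀ ↣ Z ↠ S₀` with `Z ∈ B⁺`, `S₀ ∈ S`,
such that `z^* : E(Z, V₀) → E(B₀, V₀)` is surjective for every `V₀ ∈ V`. -/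
def IsReflectionSeq {B₀ Z S₀ : B} (z : B₀ ⟶ Z) (w : Z ⟶ S₀) : Prop :=
  Z ∈ σ.tPos T U V ∧ S₀ ∈ S ∧ σ.Conflation z w ∧
    ∀ ⦃V₀ : B⦄, V₀ ∈ V → Function.Surjective (fun δ : σ.Ext Z V₀ => σ.pull z δ)

/-- A *coreflection sequence* for `B₀`: a conflation `V₀ ↣ X ↠ B₀` with `X ∈ B⁻`, `V₀ ∈ V`,
such that `x_* : E(S₀, X) → E(S₀, B₀)` is surjective for every `S₀ ∈ S`. -/
def IsCoreflectionSeq {V₀ X B₀ : B} (v : V₀ ⟶ X) (x : X ⟶ B₀) : Prop :=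
  X ∈ σ.tNeg S T U ∧ V₀ ∈ V ∧ σ.Conflation v x ∧
    ∀ ⦃S₀ : B⦄, S₀ ∈ S → Function.Surjective (fun δ : σ.Ext S₀ X => σ.push x δ)

end Twin

section Single

variable (U V : Set B)

/-- `B⁺` for a single cotorsion pair `(U,V)`, with core `W = U ∩ V`. -/
def sPos : Set B := σ.Cone V (U ∩ V)

/-- `B⁻` for a single cotorsion pair `(U,V)`, with core `W = U ∩ V`. -/
def sNeg : Set B := σ.CoCone (U ∩ V) U

/-- The class of objects of the heart of a single cotorsion pair. -/
def sHeartSet : Set B := σ.sPos U V ∩ σ.sNeg U V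

/-- The heart `H/W` of a cotorsion pair `(U,V)`, a full subcategory of `B/W`, `W = U ∩ V`. -/
abbrev SHeart := ObjectProperty.FullSubcategory (fun X : QuotCat (U ∩ V : Set B) => X.as ∈ σ.sHeartSet U V)

/-- The inclusion of the heart into the quotient category `B/W`. -/
abbrev sHeartIncl : σ.SHeart U V ⥤ QuotCat (U ∩ V : Set B) := ObjectProperty.ι _

/-- The kernel `K = add(U ∗ V)` of a cotorsion pair. -/
def kernelSet : Set B := σ.addStar U V

/-- The coheart `C = ⊥₁K` of a cotorsion pair. -/
def coheart : Set B := {X | ∀ ⦃K : B⦄, K ∈ σ.kernelSet U V → ∀ δ : σ.Ext X K, δ = 0}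


/-- An object of the heart determined by an object of `B` lying in `B⁺ ∩ B⁻`. -/
def sHeartObj {X : B} (hX : X ∈ σ.sHeartSet U V) : σ.SHeart U V :=
  ⟨(toQuot (U ∩ V : Set B)).obj X, hX⟩

/-- The image in the heart of a morphism of `B` between objects of `B⁺ ∩ B⁻`. -/
def sHeartHom {X Y : B} (hX : X ∈ σ.sHeartSet U V) (hY : Y ∈ σ.sHeartSet U V) (f : X ⟶ Y) :
    σ.sHeartObj U V hX ⟶ σ.sHeartObj U V hY :=
  ⟨(toQuot (U ∩ V : Set B)).map f⟩

end Single

end ExtStruct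

end ExtCat

section More

variable {B : Type u} [Category.{v} B] [Preadditive B] [HasFiniteBiproducts B]

namespace ExtStruct

variable (σ : ExtStruct B)

/-- `Ω D₀ = CoCone(P, D₀)`, the syzygy class of a class of objects `D₀`. -/
def omegaSet (D₀ : Set B) : Set B := σ.CoCone σ.projs D₀

/-- A choice of iterated syzygies of `X`: `Z 0 = X` and for each `i` there is a conflation
`Z (i+1) ↣ P ↠ Z i` with `P` projective. -/
def SyzygyChain (X : B) (Z : ℕ → B) : Prop :=
  Z 0 = X ∧ ∀ i : ℕ, ∃ (P : B) (f : Z (i + 1) ⟶ P) (g : P ⟶ Z i),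
    σ.IsProj P ∧ σ.Conflation f g

/-- A choice of iterated cosyzygies of `Y`: `Z 0 = Y` and for each `i` there is a conflation
`Z i ↣ I ↠ Z (i+1)` with `I` injective. -/
def CosyzygyChain (Y : B) (Z : ℕ → B) : Prop :=
  Z 0 = Y ∧ ∀ i : ℕ, ∃ (I : B) (f : Z i ⟶ I) (g : I ⟶ Z (i + 1)),
    σ.IsInj I ∧ σ.Conflation f g

/-- Vanishing of the higher extension group `E^{i+1}(X, Y) = E(X, Σ^i Y)`, expressed via
cosyzygy chains.  (`hExtVanish σ X Y 0` is the vanishing of `E(X,Y)` itself.) -/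
def hExtVanish (X Y : B) (i : ℕ) : Prop :=
  ∀ Z : ℕ → B, σ.CosyzygyChain Y Z → ∀ δ : σ.Ext X (Z i), δ = 0

/-- `Σ^j D₀`: the class of `j`-th cosyzygies of objects of `D₀`. -/
def sigmaSet (j : ℕ) (D₀ : Set B) : Set B :=
  {X | ∃ Y ∈ D₀, ∃ Z : ℕ → B, σ.CosyzygyChain Y Z ∧ Z j = X}

/-- An `n`-cluster tilting subcategory of an extriangulated category:
it is functorially finite, and `X ∈ M` iff `E^i(X, M) = 0` for `1 ≤ i ≤ n - 1`,
iff `E^i(M, X) = 0` for `1 ≤ i ≤ n - 1`. -/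
structure IsNClusterTilting (n : ℕ) (M : Set B) : Prop where
  contravariantly_finite : ∀ X : B, ∃ M₀ ∈ M, ∃ f : M₀ ⟶ X,
      ∀ M₁ ∈ M, ∀ g : M₁ ⟶ X, ∃ h : M₁ ⟶ M₀, h ≫ f = g
  covariantly_finite : ∀ X : B, ∃ M₀ ∈ M, ∃ f : X ⟶ M₀,
      ∀ M₁ ∈ M, ∀ g : X ⟶ M₁, ∃ h : M₀ ⟶ M₁, f ≫ h = g
  mem_iff_vanish_left : ∀ X : B,
      X ∈ M ↔ ∀ i : ℕ, i ≤ n - 2 → ∀ Y ∈ M, σ.hExtVanish X Y i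
  mem_iff_vanish_right : ∀ X : B,
      X ∈ M ↔ ∀ i : ℕ, i ≤ n - 2 → ∀ Y ∈ M, σ.hExtVanish Y X i

/-- `mlev σ M k` is the subcategory `M_{k+1}` of the paper: `M_1 = M` and
`M_{ℓ} = Cone(M_{ℓ-1}, M)`. -/
def mlev (M : Set B) : ℕ → Set B
  | 0 => M
  | (k + 1) => σ.Cone (mlev M k) M

end ExtStruct

section Reflectors

variable (W P N : Set B)

/-- The data of a reflection functor `σ⁺` onto the objects of `B⁺` (given by the class `P`),
i.e. a left adjoint of the inclusion of the full subcategory of `B/W` on `P` in the bijection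
formulation: composing with the unit `B → σ⁺B` gives bijections
`(σ⁺X ⟶ Y) ≃ (X ⟶ Y)` for all `Y` lying in `P`. -/
structure ReflectorData where
  σp : QuotCat W ⥤ QuotCat W
  mem : ∀ X : QuotCat W, (σp.obj X).as ∈ P
  unit : 𝟭 (QuotCat W) ⟶ σp
  bij : ∀ (X Y : QuotCat W), Y.as ∈ P →
      Function.Bijective (fun g : (σp.obj X ⟶ Y) => unit.app X ≫ g)

/-- The data of a coreflection functor `σ⁻` onto the objects of `B⁻` (given by the class `N`). -/
structure CoreflectorData where
  σm : QuotCat W ⥤ QuotCat W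
  mem : ∀ X : QuotCat W, (σm.obj X).as ∈ N
  counit : σm ⟶ 𝟭 (QuotCat W)
  bij : ∀ (X Y : QuotCat W), X.as ∈ N →
      Function.Bijective (fun g : (X ⟶ σm.obj Y) => g ≫ counit.app Y)

end Reflectors

namespace ExtStruct

variable (σ : ExtStruct B)

/-- The data of the cohomological functor `H = σ⁻ ∘ σ⁺ ∘ π : B → H` associated to a cotorsion
pair `(U, V)`: reflection and coreflection functors together with a functor `H` to the heart
which is isomorphic to `σ⁻ ∘ σ⁺ ∘ π` after composition with the inclusion of the heart. -/
structure HeartFunctorData (U V : Set B) where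
  refl : ReflectorData (B := B) (U ∩ V) (σ.sPos U V)
  corefl : CoreflectorData (B := B) (U ∩ V) (σ.sNeg U V)
  H : B ⥤ σ.SHeart U V
  iso : (H ⋙ σ.sHeartIncl U V) ≅ (toQuot (U ∩ V : Set B) ⋙ refl.σp ⋙ corefl.σm)

end ExtStruct

section Mod

variable (D : Type u₂) [Category.{v₂} D] [Preadditive D]

/-- A coherent (finitely presented) functor `Dᵒᵖ ⥤ Ab`: one admitting an exact presentation
`Hom(−,X) → Hom(−,Y) → F → 0`. -/
def IsCoherent (F : Dᵒᵖ ⥤ AddCommGrpCat.{v₂}) : Prop :=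
  ∃ (X Y : D) (f : X ⟶ Y) (η : preadditiveYoneda.obj Y ⟶ F),
    (∀ A : D, Function.Surjective (η.app (op A))) ∧
    (∀ (A : D) (g : A ⟶ Y), η.app (op A) g = 0 ↔ ∃ h : A ⟶ X, h ≫ f = g)

/-- `mod D`: the category of coherent functors `Dᵒᵖ ⥤ Ab`. -/
abbrev ModCat := ObjectProperty.FullSubcategory (fun F : Dᵒᵖ ⥤ AddCommGrpCat.{v₂} => IsCoherent D F)

end Mod

/-- The additive quotient `C/P` of the full subcategory of `B` on a class `C₀` of objects by
(the ideal of) morphisms factoring through objects satisfying `P₀`. -/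
abbrev StableCat (C₀ P₀ : Set B) :=
  QuotCat (D := ObjectProperty.FullSubcategory (fun X : B => X ∈ C₀)) {Z | Z.obj ∈ P₀}

end More

section Statement7Proof

set_option linter.unusedSectionVars false

open CategoryTheory CategoryTheory.Limits Opposite ZeroObject

namespace Aux7

variable {B : Type u} [Category.{v} B] [Preadditive B] [HasFiniteBiproducts B] (σ : ExtStruct B)

/-! ### Basic calculus for `pull` and `push` -/

theorem pull_pull {C'' C' C A : B} (c' : C'' ⟶ C') (c : C' ⟶ C) (δ : σ.Ext C A) :
    σ.pull c' (σ.pull c δ) = σ.pull (c' ≫ c) δ := by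
  show _ = (σ.E.map (c' ≫ c).op).app A δ
  rw [op_comp, Functor.map_comp, NatTrans.comp_app, comp_apply]
  rfl

theorem push_push {C A A' A'' : B} (a : A ⟶ A') (a' : A' ⟶ A'') (δ : σ.Ext C A) :
    σ.push a' (σ.push a δ) = σ.push (a ≫ a') δ := by
  show _ = (σ.E.obj (op C)).map (a ≫ a') δ
  rw [Functor.map_comp, comp_apply]
  rfl

theorem pull_push {C' C A A' : B} (c : C' ⟶ C) (a : A ⟶ A') (δ : σ.Ext C A) :
    σ.pull c (σ.push a δ) = σ.push a (σ.pull c δ) := by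
  have h := (σ.E.map c.op).naturality a
  calc σ.pull c (σ.push a δ)
      = ((σ.E.obj (op C)).map a ≫ (σ.E.map c.op).app A') δ := (comp_apply _ _ _).symm
    _ = ((σ.E.map c.op).app A ≫ (σ.E.obj (op C')).map a) δ := by rw [h]
    _ = σ.push a (σ.pull c δ) := comp_apply _ _ _

theorem pull_id {C A : B} (δ : σ.Ext C A) : σ.pull (𝟙 C) δ = δ := by
  show (σ.E.map (𝟙 C).op).app A δ = δ
  rw [op_id, CategoryTheory.Functor.map_id, NatTrans.id_app]
  exact CategoryTheory.id_apply (C := AddCommGrpCat) δ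

theorem push_id {C A : B} (δ : σ.Ext C A) : σ.push (𝟙 A) δ = δ := by
  show (σ.E.obj (op C)).map (𝟙 A) δ = δ
  rw [CategoryTheory.Functor.map_id]
  exact CategoryTheory.id_apply (C := AddCommGrpCat) δ

theorem pull_zero {C' C A : B} (c : C' ⟶ C) : σ.pull c (0 : σ.Ext C A) = 0 :=
  map_zero _

theorem push_zero {C A A' : B} (a : A ⟶ A') : σ.push a (0 : σ.Ext C A) = 0 :=
  map_zero _

theorem pull_sub {C' C A : B} (c : C' ⟶ C) (δ δ' : σ.Ext C A) :
    σ.pull c (δ - δ') = σ.pull c δ - σ.pull c δ' :=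
  map_sub _ _ _

theorem push_sub {C A A' : B} (a : A ⟶ A') (δ δ' : σ.Ext C A) :
    σ.push a (δ - δ') = σ.push a δ - σ.push a δ' :=
  map_sub _ _ _

theorem pull_add_elt {C' C A : B} (c : C' ⟶ C) (δ δ' : σ.Ext C A) :
    σ.pull c (δ + δ') = σ.pull c δ + σ.pull c δ' :=
  map_add _ _ _

/-- Pulling along the zero morphism is zero (additivity of `E` in the first variable). -/
theorem pull_zero_mor {C' C A : B} (δ : σ.Ext C A) : σ.pull (0 : C' ⟶ C) δ = 0 := by
  haveI := σ.additive_snd A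
  show (σ.E.flip.obj A).map (0 : C' ⟶ C).op δ = 0
  have : ((0 : C' ⟶ C).op) = (0 : op C ⟶ op C') := rfl
  rw [this, Functor.map_zero]
  rfl

/-- Pushing along the zero morphism is zero (additivity of `E` in the second variable). -/
theorem push_zero_mor {C A A' : B} (δ : σ.Ext C A) : σ.push (0 : A ⟶ A') δ = 0 := by
  haveI := σ.additive_fst (op C)
  show (σ.E.obj (op C)).map (0 : A ⟶ A') δ = 0
  rw [Functor.map_zero]
  rfl

theorem pull_sub_mor {C' C A : B} (c c' : C' ⟶ C) (δ : σ.Ext C A) :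
    σ.pull (c - c') δ = σ.pull c δ - σ.pull c' δ := by
  haveI := σ.additive_snd A
  show (σ.E.flip.obj A).map (c - c').op δ = _
  have : ((c - c' : C' ⟶ C).op) = (c.op - c'.op) := rfl
  rw [this, Functor.map_sub]
  rfl

theorem pull_add_mor {C' C A : B} (c c' : C' ⟶ C) (δ : σ.Ext C A) :
    σ.pull (c + c') δ = σ.pull c δ + σ.pull c' δ := by
  haveI := σ.additive_snd A
  show (σ.E.flip.obj A).map (c + c').op δ = _
  have : ((c + c' : C' ⟶ C).op) = (c.op + c'.op) := rfl
  rw [this, Functor.map_add]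
  rfl

/-! ### Basic conflation lemmas -/

theorem comp_eq_zero {A X C : B} {δ : σ.Ext C A} {x : A ⟶ X} {y : X ⟶ C}
    (h : σ.realize δ x y) : x ≫ y = 0 := by
  obtain ⟨c, -, hc2⟩ := σ.et3 (0 : σ.Ext X A) δ biprod.inl biprod.snd x y
    (σ.realize_zero A X) h (𝟙 A) (biprod.desc x (𝟙 X)) (by simp)
  have h2 := congrArg (fun t => biprod.inl ≫ t) hc2
  simpa using h2.symm

theorem push_self {A X C : B} {δ : σ.Ext C A} {x : A ⟶ X} {y : X ⟶ C}
    (h : σ.realize δ x y) : σ.push x δ = 0 := by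
  obtain ⟨c, hc1, -⟩ := σ.et3 δ (0 : σ.Ext C X) x y biprod.inl biprod.snd h
    (σ.realize_zero X C) x (biprod.lift (𝟙 X) y)
    (by apply biprod.hom_ext <;> simp [comp_eq_zero σ h])
  rw [hc1, pull_zero]

theorem pull_self {A X C : B} {δ : σ.Ext C A} {x : A ⟶ X} {y : X ⟶ C}
    (h : σ.realize δ x y) : σ.pull y δ = 0 := by
  obtain ⟨a, ha1, -⟩ := σ.et3op (0 : σ.Ext X A) δ biprod.inl biprod.snd x y
    (σ.realize_zero A X) h biprod.snd y rfl
  rw [← ha1, push_zero]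

theorem split_of_realize_zero {A X C : B} {x : A ⟶ X} {y : X ⟶ C}
    (h : σ.realize (0 : σ.Ext C A) x y) :
    ∃ b : X ≅ A ⊞ C, x ≫ b.hom = biprod.inl ∧ b.hom ≫ biprod.snd = y :=
  σ.realize_unique 0 x y biprod.inl biprod.snd h (σ.realize_zero A C)

theorem retraction_of_realize_zero {A X C : B} {x : A ⟶ X} {y : X ⟶ C}
    (h : σ.realize (0 : σ.Ext C A) x y) : ∃ r : X ⟶ A, x ≫ r = 𝟙 A := by
  obtain ⟨b, hb1, -⟩ := split_of_realize_zero σ h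
  exact ⟨b.hom ≫ biprod.fst, by rw [← Category.assoc, hb1]; simp⟩

theorem section_of_realize_zero {A X C : B} {x : A ⟶ X} {y : X ⟶ C}
    (h : σ.realize (0 : σ.Ext C A) x y) : ∃ s : C ⟶ X, s ≫ y = 𝟙 C := by
  obtain ⟨b, -, hb2⟩ := split_of_realize_zero σ h
  refine ⟨biprod.inr ≫ b.inv, ?_⟩
  have : b.inv ≫ y = biprod.snd := by rw [← hb2, ← Category.assoc]; simp
  rw [Category.assoc, this]; simp

/-- The conflation `A = A → 0`. -/
theorem conf_id_zero (A : B) : σ.realize (0 : σ.Ext (0 : B) A) (𝟙 A) 0 := by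
  have hinv : (biprod.lift (𝟙 A) (0 : A ⟶ (0 : B))) ≫ biprod.fst = 𝟙 A := by simp
  have hinv2 : biprod.fst ≫ biprod.lift (𝟙 A) (0 : A ⟶ (0 : B)) = 𝟙 (A ⊞ (0 : B)) := by
    apply biprod.hom_ext
    · simp
    · exact (isZero_zero B).eq_of_tgt _ _
  have h := σ.realize_iso (0 : σ.Ext (0 : B) A) biprod.inl biprod.snd
    (Iso.mk biprod.fst (biprod.lift (𝟙 A) 0) hinv2 hinv) (σ.realize_zero A 0)
  have h1 : biprod.inl ≫ (Iso.mk biprod.fst (biprod.lift (𝟙 A) 0) hinv2 hinv).hom = 𝟙 A := by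
    simp
  rw [h1] at h
  have h2 := (isZero_zero B).eq_of_tgt
    ((Iso.mk biprod.fst (biprod.lift (𝟙 A) 0) hinv2 hinv).inv ≫ biprod.snd) 0
  rwa [h2] at h

/-- The conflation `0 → A = A`. -/
theorem conf_zero_id (A : B) : σ.realize (0 : σ.Ext A (0 : B)) 0 (𝟙 A) := by
  have hinv : (biprod.lift (0 : A ⟶ (0 : B)) (𝟙 A)) ≫ biprod.snd = 𝟙 A := by simp
  have hinv2 : biprod.snd ≫ biprod.lift (0 : A ⟶ (0 : B)) (𝟙 A) = 𝟙 ((0 : B) ⊞ A) := by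
    apply biprod.hom_ext
    · exact (isZero_zero B).eq_of_tgt _ _
    · simp
  have h := σ.realize_iso (0 : σ.Ext A (0 : B)) biprod.inl biprod.snd
    (Iso.mk biprod.snd (biprod.lift 0 (𝟙 A)) hinv2 hinv) (σ.realize_zero 0 A)
  have h1 : biprod.inl ≫ (Iso.mk biprod.snd (biprod.lift 0 (𝟙 A)) hinv2 hinv).hom
      = (0 : (0 : B) ⟶ A) := by simp
  have h2 : (Iso.mk biprod.snd (biprod.lift 0 (𝟙 A)) hinv2 hinv).inv ≫ biprod.snd = 𝟙 A := by
    simp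
  rwa [h1, h2] at h

/-- Weak cokernel: a morphism killing the inflation factors through the deflation. -/
theorem weak_coker {A X C Q : B} {δ : σ.Ext C A} {x : A ⟶ X} {y : X ⟶ C}
    (h : σ.realize δ x y) {g : X ⟶ Q} (hg : x ≫ g = 0) : ∃ k : C ⟶ Q, y ≫ k = g := by
  obtain ⟨c, -, hc⟩ := σ.et3 δ (0 : σ.Ext Q (0 : B)) x y 0 (𝟙 Q) h (conf_zero_id σ Q)
    0 g (by simp [hg])
  exact ⟨c, by simpa using hc⟩

/-- Weak kernel: a morphism killing the deflation factors through the inflation. -/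
theorem weak_ker {A X C Q : B} {δ : σ.Ext C A} {x : A ⟶ X} {y : X ⟶ C}
    (h : σ.realize δ x y) {g : Q ⟶ X} (hg : g ≫ y = 0) : ∃ k : Q ⟶ A, k ≫ x = g := by
  obtain ⟨a, -, ha⟩ := σ.et3op (0 : σ.Ext (0 : B) Q) δ (𝟙 Q) 0 x y (conf_id_zero σ Q) h
    g 0 (by simp [hg])
  exact ⟨a, by simpa using ha.symm⟩

/-- Extension along an inflation. -/
theorem extend_of_push_zero {A X C Q : B} {δ : σ.Ext C A} {x : A ⟶ X} {y : X ⟶ C}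
    (h : σ.realize δ x y) {f : A ⟶ Q} (hf : σ.push f δ = 0) : ∃ g : X ⟶ Q, x ≫ g = f := by
  obtain ⟨b, hb1, -⟩ := σ.realize_map δ (0 : σ.Ext C Q) x y biprod.inl biprod.snd f (𝟙 C) h
    (σ.realize_zero Q C) (by rw [hf, pull_zero])
  exact ⟨b ≫ biprod.fst, by rw [← Category.assoc, hb1]; simp⟩

/-- Lifting along a deflation. -/
theorem lift_of_pull_zero {A X C Q : B} {δ : σ.Ext C A} {x : A ⟶ X} {y : X ⟶ C}
    (h : σ.realize δ x y) {k : Q ⟶ C} (hk : σ.pull k δ = 0) : ∃ l : Q ⟶ X, l ≫ y = k := by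
  obtain ⟨b, -, hb2⟩ := σ.realize_map (0 : σ.Ext Q A) δ biprod.inl biprod.snd x y (𝟙 A) k
    (σ.realize_zero A Q) h (by rw [push_zero, hk])
  refine ⟨biprod.inr ≫ b, ?_⟩
  rw [Category.assoc, ← hb2]; simp

/-- Covariant `E`-exactness: `Hom(Q,C) → E(Q,A) → E(Q,X)`. -/
theorem exact_E_cov {A X C Q : B} {δ : σ.Ext C A} {x : A ⟶ X} {y : X ⟶ C}
    (h : σ.realize δ x y) {θ : σ.Ext Q A} (hθ : σ.push x θ = 0) :
    ∃ g : Q ⟶ C, θ = σ.pull g δ := by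
  obtain ⟨P, u, v, hP⟩ := σ.realize_ex θ
  obtain ⟨b, hb1, -⟩ := σ.realize_map θ (0 : σ.Ext Q X) u v biprod.inl biprod.snd x (𝟙 Q) hP
    (σ.realize_zero X Q) (by rw [hθ, pull_zero])
  have ht : u ≫ (b ≫ biprod.fst) = 𝟙 A ≫ x := by rw [← Category.assoc, hb1]; simp
  obtain ⟨c, hc, -⟩ := σ.et3 θ δ u v x y hP h (𝟙 A) (b ≫ biprod.fst) ht
  exact ⟨c, by rw [← hc, push_id]⟩

/-- Contravariant `E`-exactness: `Hom(A,Q) → E(C,Q) → E(X,Q)`. -/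
theorem exact_E_contra {A X C Q : B} {δ : σ.Ext C A} {x : A ⟶ X} {y : X ⟶ C}
    (h : σ.realize δ x y) {μ : σ.Ext C Q} (hμ : σ.pull y μ = 0) :
    ∃ c : A ⟶ Q, μ = σ.push c δ := by
  obtain ⟨P, u, v, hP⟩ := σ.realize_ex μ
  obtain ⟨b, -, hb2⟩ := σ.realize_map (0 : σ.Ext X Q) μ biprod.inl biprod.snd u v (𝟙 Q) y
    (σ.realize_zero Q X) hP (by rw [push_zero, hμ])
  have ht : y ≫ 𝟙 C = (biprod.inr ≫ b) ≫ v := by rw [Category.assoc, ← hb2]; simp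
  obtain ⟨a, ha, -⟩ := σ.et3op δ μ x y u v h hP (biprod.inr ≫ b) (𝟙 C) ht
  exact ⟨a, by rw [ha, pull_id]⟩

/-- Contravariant middle `E`-exactness: `E(S₀,Q) → E(Z,Q) → E(B₀,Q)`. -/
theorem exact_E_contra_mid {B₀ Z S₀ Q : B} {δ₀ : σ.Ext S₀ B₀} {z : B₀ ⟶ Z} {w : Z ⟶ S₀}
    (h : σ.realize δ₀ z w) {θ : σ.Ext Z Q} (hθ : σ.pull z θ = 0) :
    ∃ ρ : σ.Ext S₀ Q, θ = σ.pull w ρ := by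
  obtain ⟨P, u, v, hP⟩ := σ.realize_ex θ
  obtain ⟨E₀, e, d, m, δ'', hsq, hem, hre1, hre2, hpushd, hpullv⟩ :=
    σ.et4op θ u v δ₀ z w hP h
  rw [hθ] at hre2
  obtain ⟨r, hr⟩ := retraction_of_realize_zero σ hre2
  refine ⟨σ.push r δ'', ?_⟩
  rw [pull_push, hpullv, push_push, hr, push_id]

/-- Covariant middle `E`-exactness: `E(Q,A) → E(Q,X) → E(Q,C)`. -/
theorem exact_E_cov_mid {A X C Q : B} {δ : σ.Ext C A} {x : A ⟶ X} {y : X ⟶ C}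
    (h : σ.realize δ x y) {ν : σ.Ext Q X} (hν : σ.push y ν = 0) :
    ∃ κ : σ.Ext Q A, ν = σ.push x κ := by
  obtain ⟨P, u, v, hP⟩ := σ.realize_ex ν
  obtain ⟨E₀, d, e, h', δ'', hsq, hhe, hre1, hre2, hpulld, hpushx⟩ :=
    σ.et4 δ x y ν u v h hP
  rw [hν] at hre2
  obtain ⟨s, hs⟩ := section_of_realize_zero σ hre2
  refine ⟨σ.pull s δ'', ?_⟩
  rw [← pull_push, hpushx, pull_pull, hs, pull_id]

/-- An endomorphism of the middle term of a conflation compatible with the identity is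
an isomorphism. -/
theorem endo_isIso {A X C : B} {δ : σ.Ext C A} {x : A ⟶ X} {y : X ⟶ C}
    (h : σ.realize δ x y) {f : X ⟶ X} (h1 : x ≫ f = x) (h2 : f ≫ y = y) : IsIso f := by
  obtain ⟨k, hk⟩ := weak_ker σ h (g := 𝟙 X - f) (by simp [h2])
  have hxn : x ≫ (𝟙 X - f) = 0 := by simp [h1]
  have hn : (𝟙 X - f) ≫ (𝟙 X - f) = 0 := by
    nth_rewrite 1 [← hk]
    rw [Category.assoc, hxn, Limits.comp_zero]
  refine ⟨𝟙 X + (𝟙 X - f), ?_, ?_⟩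
  · have h' := hn
    simp only [Preadditive.sub_comp, Preadditive.comp_sub, Category.id_comp,
      Category.comp_id] at h'
    have key : f - f ≫ f = 𝟙 X - f := (sub_eq_zero.mp h').symm
    simp only [Preadditive.comp_add, Preadditive.comp_sub, Category.comp_id]
    rw [key]
    abel
  · have h' := hn
    simp only [Preadditive.sub_comp, Preadditive.comp_sub, Category.id_comp,
      Category.comp_id] at h'
    have key : f - f ≫ f = 𝟙 X - f := (sub_eq_zero.mp h').symm
    simp only [Preadditive.add_comp, Preadditive.sub_comp, Category.id_comp]
    rw [key]
    abel

/-! ### Closure properties from the twin cotorsion pair -/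

section Twin

variable {S T U V : Set B} (tw : σ.IsTwinCotorsionPair S T U V)

include tw

theorem mem_U_of_vanish {X : B} (hX : ∀ ⦃V₀ : B⦄, V₀ ∈ V → ∀ θ : σ.Ext X V₀, θ = 0) :
    X ∈ U := by
  obtain ⟨V₀, U₀, f, g, hV₀, hU₀, δ, hre⟩ := tw.snd.resolve X
  rw [hX hV₀ δ] at hre
  obtain ⟨s, hs⟩ := section_of_realize_zero σ hre
  exact tw.snd.addU.summand_mem X U₀ hU₀ s g hs

theorem mem_V_of_vanish {X : B} (hX : ∀ ⦃U₀ : B⦄, U₀ ∈ U → ∀ θ : σ.Ext U₀ X, θ = 0) :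
    X ∈ V := by
  obtain ⟨V₀, U₀, f, g, hV₀, hU₀, δ, hre⟩ := tw.snd.coresolve X
  rw [hX hU₀ δ] at hre
  obtain ⟨r, hr⟩ := retraction_of_realize_zero σ hre
  exact tw.snd.addV.summand_mem X V₀ hV₀ f r hr

theorem mem_T_of_vanish {X : B} (hX : ∀ ⦃S₀ : B⦄, S₀ ∈ S → ∀ θ : σ.Ext S₀ X, θ = 0) :
    X ∈ T := by
  obtain ⟨T₀, S₀, f, g, hT₀, hS₀, δ, hre⟩ := tw.fst.coresolve X
  rw [hX hS₀ δ] at hre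
  obtain ⟨r, hr⟩ := retraction_of_realize_zero σ hre
  exact tw.fst.addV.summand_mem X T₀ hT₀ f r hr

theorem mem_S_of_vanish {X : B} (hX : ∀ ⦃T₀ : B⦄, T₀ ∈ T → ∀ θ : σ.Ext X T₀, θ = 0) :
    X ∈ S := by
  obtain ⟨T₀, S₀, f, g, hT₀, hS₀, δ, hre⟩ := tw.fst.resolve X
  rw [hX hT₀ δ] at hre
  obtain ⟨s, hs⟩ := section_of_realize_zero σ hre
  exact tw.fst.addU.summand_mem X S₀ hS₀ s g hs

theorem V_subset_T : V ⊆ T := fun _ hV₀ =>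
  mem_T_of_vanish σ tw fun _ hS₀ θ => tw.ext_SV hS₀ hV₀ θ

theorem S_subset_U : S ⊆ U := fun _ hS₀ =>
  mem_U_of_vanish σ tw fun _ hV₀ θ => tw.ext_SV hS₀ hV₀ θ

/-- Extension-closure of `U`. -/
theorem mem_U_of_conf {A X C : B} {δ : σ.Ext C A} {x : A ⟶ X} {y : X ⟶ C}
    (h : σ.realize δ x y) (hA : A ∈ U) (hC : C ∈ U) : X ∈ U := by
  refine mem_U_of_vanish σ tw fun V₀ hV₀ θ => ?_
  have h1 : σ.pull x θ = 0 := tw.snd.ext_vanish hA hV₀ _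
  obtain ⟨ρ, hρ⟩ := exact_E_contra_mid σ h h1
  rw [hρ, tw.snd.ext_vanish hC hV₀ ρ, pull_zero]

/-- Extension-closure of `S`. -/
theorem mem_S_of_conf {A X C : B} {δ : σ.Ext C A} {x : A ⟶ X} {y : X ⟶ C}
    (h : σ.realize δ x y) (hA : A ∈ S) (hC : C ∈ S) : X ∈ S := by
  refine mem_S_of_vanish σ tw fun T₀ hT₀ θ => ?_
  have h1 : σ.pull x θ = 0 := tw.fst.ext_vanish hA hT₀ _
  obtain ⟨ρ, hρ⟩ := exact_E_contra_mid σ h h1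
  rw [hρ, tw.fst.ext_vanish hC hT₀ ρ, pull_zero]

/-- Extension-closure of `T`. -/
theorem mem_T_of_conf {A X C : B} {δ : σ.Ext C A} {x : A ⟶ X} {y : X ⟶ C}
    (h : σ.realize δ x y) (hA : A ∈ T) (hC : C ∈ T) : X ∈ T := by
  refine mem_T_of_vanish σ tw fun S₀ hS₀ θ => ?_
  have h1 : σ.push y θ = 0 := tw.fst.ext_vanish hS₀ hC _
  obtain ⟨κ, hκ⟩ := exact_E_cov_mid σ h h1
  rw [hκ, tw.fst.ext_vanish hS₀ hA κ, push_zero]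

/-- Extension-closure of `V`. -/
theorem mem_V_of_conf {A X C : B} {δ : σ.Ext C A} {x : A ⟶ X} {y : X ⟶ C}
    (h : σ.realize δ x y) (hA : A ∈ V) (hC : C ∈ V) : X ∈ V := by
  refine mem_V_of_vanish σ tw fun U₀ hU₀ θ => ?_
  have h1 : σ.push y θ = 0 := tw.snd.ext_vanish hU₀ hC _
  obtain ⟨κ, hκ⟩ := exact_E_cov_mid σ h h1
  rw [hκ, tw.snd.ext_vanish hU₀ hA κ, push_zero]

theorem zero_mem_S : (0 : B) ∈ S := tw.fst.addU.zero_mem _ (isZero_zero B)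
theorem zero_mem_W : (0 : B) ∈ T ∩ U :=
  ⟨tw.fst.addV.zero_mem _ (isZero_zero B), tw.snd.addU.zero_mem _ (isZero_zero B)⟩

theorem W_mem_tNeg {K : B} (hK : K ∈ T ∩ U) : K ∈ σ.tNeg S T U :=
  ⟨K, 0, 𝟙 K, 0, hK, zero_mem_S σ tw, 0, conf_id_zero σ K⟩

theorem W_mem_tPos {K : B} (hK : K ∈ T ∩ U) : K ∈ σ.tPos T U V :=
  ⟨0, K, 0, 𝟙 K, tw.snd.addV.zero_mem _ (isZero_zero B), hK, 0, conf_zero_id σ K⟩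

theorem S_mem_tNeg {X : B} (hX : X ∈ S) : X ∈ σ.tNeg S T U := by
  obtain ⟨T₀, S₀, f, g, hT₀, hS₀, δ, hre⟩ := tw.fst.coresolve X
  have hT₀U : T₀ ∈ U := by
    refine mem_U_of_vanish σ tw fun V₀ hV₀ θ => ?_
    have h1 : σ.pull f θ = 0 := tw.ext_SV hX hV₀ _
    obtain ⟨ρ, hρ⟩ := exact_E_contra_mid σ hre h1
    rw [hρ, tw.ext_SV hS₀ hV₀ ρ, pull_zero]
  exact ⟨T₀, S₀, f, g, ⟨hT₀, hT₀U⟩, hS₀, δ, hre⟩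

theorem V_mem_tPos {X : B} (hX : X ∈ V) : X ∈ σ.tPos T U V := by
  obtain ⟨V₁, U₁, f, g, hV₁, hU₁, δ, hre⟩ := tw.snd.resolve X
  have hU₁T : U₁ ∈ T := by
    refine mem_T_of_vanish σ tw fun S₀ hS₀ θ => ?_
    have h1 : σ.push g θ = 0 := tw.ext_SV hS₀ hX _
    obtain ⟨κ, hκ⟩ := exact_E_cov_mid σ hre h1
    rw [hκ, tw.ext_SV hS₀ hV₁ κ, push_zero]
  exact ⟨V₁, U₁, f, g, hV₁, ⟨hU₁T, hU₁⟩, δ, hre⟩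

/-- `tNeg` is closed under direct sums. -/
theorem tNeg_biprod {X Y : B} (hX : X ∈ σ.tNeg S T U) (hY : Y ∈ σ.tNeg S T U) :
    (X ⊞ Y) ∈ σ.tNeg S T U := by
  obtain ⟨W₁, S₁, f₁, g₁, hW₁, hS₁, δ₁, h₁⟩ := hX
  obtain ⟨W₂, S₂, f₂, g₂, hW₂, hS₂, δ₂, h₂⟩ := hY
  exact ⟨W₁ ⊞ W₂, S₁ ⊞ S₂, biprod.map f₁ f₂, biprod.map g₁ g₂,
    ⟨tw.fst.addV.biprod_mem _ _ hW₁.1 hW₂.1, tw.snd.addU.biprod_mem _ _ hW₁.2 hW₂.2⟩,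
    tw.fst.addU.biprod_mem _ _ hS₁ hS₂, _, σ.realize_sum δ₁ δ₂ f₁ g₁ f₂ g₂ h₁ h₂⟩

/-- `tNeg` is closed under taking cocones of conflations with cone in `S`. -/
theorem tNeg_cocone_S {Z Y₁ S₃ : B} {δ : σ.Ext S₃ Z} {f : Z ⟶ Y₁} {g : Y₁ ⟶ S₃}
    (h : σ.realize δ f g) (hY : Y₁ ∈ σ.tNeg S T U) (hS : S₃ ∈ S) : Z ∈ σ.tNeg S T U := by
  obtain ⟨W₄, S₄, f₂, g₂, hW₄, hS₄, δ₂, h₂⟩ := hY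
  obtain ⟨E, d, e, h', δ'', hsq, hhe, hre1, hre2, -, -⟩ := σ.et4 δ f g δ₂ f₂ g₂ h h₂
  have hE : E ∈ S := mem_S_of_conf σ tw hre2 hS hS₄
  exact ⟨W₄, E, f ≫ f₂, h', hW₄, hE, δ'', hre1⟩

/-- `tPos` is closed under taking cones of conflations with kernel in `V`. -/
theorem tPos_cone_V {V₆ Y₁ Z : B} {δ : σ.Ext Z V₆} {f : V₆ ⟶ Y₁} {g : Y₁ ⟶ Z}
    (h : σ.realize δ f g) (hV : V₆ ∈ V) (hY : Y₁ ∈ σ.tPos T U V) : Z ∈ σ.tPos T U V := by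
  obtain ⟨V₃, W₃, f₃, g₃, hV₃, hW₃, δ₃, h₃⟩ := hY
  obtain ⟨E, e, d, m, δ'', hsq, hem, hre1, hre2, -, -⟩ := σ.et4op δ₃ f₃ g₃ δ f g h₃ h
  have hE : E ∈ V := mem_V_of_conf σ tw hre2 hV₃ hV
  exact ⟨E, W₃, m, g₃ ≫ g, hE, hW₃, δ'', hre1⟩

omit tw in
/-- Transport of being a conflation along an isomorphism of the first object. -/
theorem realize_src_iso {A' A X C : B} {δ : σ.Ext C A} {x : A ⟶ X} {y : X ⟶ C}
    (h : σ.realize δ x y) (e : A' ≅ A) : σ.realize (σ.push e.inv δ) (e.hom ≫ x) y := by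
  obtain ⟨X₂, x₂, y₂, h₂⟩ := σ.realize_ex (σ.push e.inv δ)
  obtain ⟨b, hb1, hb2⟩ := σ.realize_map (σ.push e.inv δ) δ x₂ y₂ x y e.hom (𝟙 C) h₂ h
    (by rw [push_push, e.inv_hom_id, push_id, pull_id])
  obtain ⟨b', hb1', hb2'⟩ := σ.realize_map δ (σ.push e.inv δ) x y x₂ y₂ e.inv (𝟙 C) h h₂
    (by rw [pull_id])
  simp only [Category.comp_id] at hb2 hb2'
  haveI hbb' : IsIso (b' ≫ b) := by
    refine endo_isIso σ h ?_ ?_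
    · rw [← Category.assoc, hb1', Category.assoc, hb1, ← Category.assoc, e.inv_hom_id,
        Category.id_comp]
    · rw [Category.assoc, ← hb2, ← hb2']
  haveI hb'b : IsIso (b ≫ b') := by
    refine endo_isIso σ h₂ ?_ ?_
    · rw [← Category.assoc, hb1, Category.assoc, hb1', ← Category.assoc, e.hom_inv_id,
        Category.id_comp]
    · rw [Category.assoc, ← hb2', ← hb2]
  haveI : IsIso b := by
    have hright : b ≫ (b' ≫ inv (b ≫ b')) = 𝟙 _ := by
      rw [← Category.assoc]; exact IsIso.hom_inv_id _
    have heq : b' ≫ inv (b ≫ b') = inv (b' ≫ b) ≫ b' := by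
      calc b' ≫ inv (b ≫ b')
          = (inv (b' ≫ b) ≫ (b' ≫ b)) ≫ (b' ≫ inv (b ≫ b')) := by
            rw [IsIso.inv_hom_id, Category.id_comp]
        _ = inv (b' ≫ b) ≫ b' ≫ (b ≫ (b' ≫ inv (b ≫ b'))) := by
            simp only [Category.assoc]
        _ = inv (b' ≫ b) ≫ b' := by rw [hright, Category.comp_id]
    refine ⟨b' ≫ inv (b ≫ b'), hright, ?_⟩
    rw [heq, Category.assoc, IsIso.inv_hom_id]
  have hre := σ.realize_iso (σ.push e.inv δ) x₂ y₂ (asIso b) h₂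
  have e1 : x₂ ≫ (asIso b).hom = e.hom ≫ x := hb1
  have e2 : (asIso b).inv ≫ y₂ = y := by
    rw [Iso.inv_comp_eq]
    simpa using hb2
  rwa [e1, e2] at hre

omit tw in
/-- `tNeg` is closed under isomorphisms in `B`. -/
theorem tNeg_iso_B {A A' : B} (e : A' ≅ A) (hA : A ∈ σ.tNeg S T U) : A' ∈ σ.tNeg S T U := by
  obtain ⟨W₁, S₁, f, g, hW, hS, δ, hre⟩ := hA
  exact ⟨W₁, S₁, e.hom ≫ f, g, hW, hS, _, realize_src_iso σ hre e⟩

omit tw in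
/-- Uniqueness of the cone of an inflation. -/
theorem cone_unique {A X C₁ C₂ : B} {δ₁ : σ.Ext C₁ A} {δ₂ : σ.Ext C₂ A} {x : A ⟶ X}
    {y₁ : X ⟶ C₁} {y₂ : X ⟶ C₂} (h₁ : σ.realize δ₁ x y₁) (h₂ : σ.realize δ₂ x y₂) :
    ∃ c : C₁ ≅ C₂, y₁ ≫ c.hom = y₂ := by
  obtain ⟨c, hc, hyc⟩ := σ.et3 δ₁ δ₂ x y₁ x y₂ h₁ h₂ (𝟙 A) (𝟙 X) (by simp)
  rw [push_id] at hc
  simp only [Category.id_comp] at hyc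
  have inj : ∀ (Q : B) (g : Q ⟶ C₁), g ≫ c = 0 → g = 0 := by
    intro Q g hg
    have hp : σ.pull g δ₁ = 0 := by
      rw [hc, pull_pull, hg, pull_zero_mor]
    obtain ⟨l, hl⟩ := lift_of_pull_zero σ h₁ hp
    have hly₂ : l ≫ y₂ = 0 := by rw [← hyc, ← Category.assoc, hl, hg]
    obtain ⟨k, hk⟩ := weak_ker σ h₂ hly₂
    rw [← hl, ← hk, Category.assoc, comp_eq_zero σ h₁, Limits.comp_zero]
  have surj : ∀ (Q : B) (t : Q ⟶ C₂), ∃ g : Q ⟶ C₁, g ≫ c = t := by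
    intro Q t
    have hθ : σ.push x (σ.pull t δ₂) = 0 := by
      rw [← pull_push, push_self σ h₂, pull_zero]
    obtain ⟨g, hg⟩ := exact_E_cov σ h₁ hθ
    have hsub : σ.pull (g ≫ c - t) δ₂ = 0 := by
      rw [pull_sub_mor, ← pull_pull, ← hc, ← hg, sub_self]
    obtain ⟨l, hl⟩ := lift_of_pull_zero σ h₂ hsub
    refine ⟨g - l ≫ y₁, ?_⟩
    rw [Preadditive.sub_comp, Category.assoc, hyc, hl]
    abel
  obtain ⟨hinv, hhc⟩ := surj C₂ (𝟙 C₂)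
  have hch : c ≫ hinv = 𝟙 C₁ := by
    have : (c ≫ hinv - 𝟙 C₁) ≫ c = 0 := by
      rw [Preadditive.sub_comp, Category.assoc, hhc, Category.comp_id, Category.id_comp,
        sub_self]
    have := inj _ _ this
    rwa [sub_eq_zero] at this
  exact ⟨⟨c, hinv, hch, hhc⟩, hyc⟩

omit tw in
/-- The pushout construction: given a conflation `A ↣ X ↠ C` and a morphism `a : A ⟶ A'`,
there is an object `Q` with conflations `A ↣ X ⊞ A' ↠ Q` and `A' ↣ Q ↠ C ⊞ 0`,
the latter realizing `pull fst (push a δ)`. -/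
theorem grid_pushout {A X C A' : B} {δ : σ.Ext C A} {x : A ⟶ X} {y : X ⟶ C}
    (h : σ.realize δ x y) (a : A ⟶ A') :
    ∃ (Q : B) (p : X ⊞ A' ⟶ Q) (d : A' ⟶ Q) (e : Q ⟶ C ⊞ (0 : B)) (δ'' : σ.Ext Q A),
      σ.realize δ'' (biprod.lift x (-a)) p ∧
      σ.realize (σ.pull biprod.fst (σ.push a δ)) d e := by
  classical
  set n : A ⊞ A' ⟶ A ⊞ A' := biprod.fst ≫ a ≫ biprod.inr with hnd
  have hn : n ≫ n = 0 := by
    simp only [hnd, Category.assoc, biprod.inr_fst_assoc, Limits.zero_comp,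
      Limits.comp_zero]
  have hφ1 : (𝟙 (A ⊞ A') - n) ≫ (𝟙 (A ⊞ A') + n) = 𝟙 (A ⊞ A') := by
    simp only [Preadditive.sub_comp, Preadditive.comp_add, Category.id_comp,
      Category.comp_id, hn]
    abel
  have hφ2 : (𝟙 (A ⊞ A') + n) ≫ (𝟙 (A ⊞ A') - n) = 𝟙 (A ⊞ A') := by
    simp only [Preadditive.add_comp, Preadditive.comp_sub, Category.id_comp,
      Category.comp_id, hn]
    abel
  have hshear := σ.realize_iso (0 : σ.Ext A' A) biprod.inl biprod.snd
    (Iso.mk (𝟙 (A ⊞ A') - n) (𝟙 (A ⊞ A') + n) hφ1 hφ2) (σ.realize_zero A A')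
  have heq1 : biprod.inl ≫ (Iso.mk (𝟙 (A ⊞ A') - n) (𝟙 (A ⊞ A') + n) hφ1 hφ2).hom
      = biprod.lift (𝟙 A) (-a) := by
    apply biprod.hom_ext <;> simp [hnd]
  have heq2 : (Iso.mk (𝟙 (A ⊞ A') - n) (𝟙 (A ⊞ A') + n) hφ1 hφ2).inv ≫ biprod.snd
      = biprod.snd + biprod.fst ≫ a := by
    simp [hnd, Preadditive.add_comp]
  rw [heq1, heq2] at hshear
  have hsum := σ.realize_sum δ (0 : σ.Ext (0 : B) A') x y (𝟙 A') 0 h (conf_id_zero σ A')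
  obtain ⟨Q, d, e, h', δ'', hsq, hhe, hre1, hre2, hpulld, hpushf⟩ :=
    σ.et4 (0 : σ.Ext A' A) (biprod.lift (𝟙 A) (-a)) (biprod.snd + biprod.fst ≫ a)
      (σ.sumExt δ 0) (biprod.map x (𝟙 A')) (biprod.map y 0) hshear hsum
  have hlift : biprod.lift (𝟙 A) (-a) ≫ biprod.map x (𝟙 A') = biprod.lift x (-a) := by
    apply biprod.hom_ext <;> simp
  rw [hlift] at hre1
  have hclass : σ.push (biprod.snd + biprod.fst ≫ a) (σ.sumExt δ (0 : σ.Ext (0 : B) A'))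
      = σ.pull (biprod.fst : C ⊞ (0 : B) ⟶ C) (σ.push a δ) := by
    rw [PreExtStruct.sumExt, pull_zero, push_zero, add_zero, push_push]
    have : biprod.inl ≫ (biprod.snd + biprod.fst ≫ a) = a := by simp
    rw [this, pull_push]
  rw [hclass] at hre2
  exact ⟨Q, h', d, e, δ'', hre1, hre2⟩

/-- Key lemma: the middle term of a reflection-like sequence on a `tNeg` object is
again in `tNeg`. -/
theorem tNeg_of_reflection {B₀ Z S₀ : B} {ξ : σ.Ext S₀ B₀} {z : B₀ ⟶ Z} {w : Z ⟶ S₀}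
    (h : σ.realize ξ z w) (hS₀ : S₀ ∈ S) (hB₀ : B₀ ∈ σ.tNeg S T U) : Z ∈ σ.tNeg S T U := by
  obtain ⟨W₁, S₁, j, q, hW₁, hS₁, δm, hm⟩ := hB₀
  obtain ⟨E₁, p₁, d₁, e₁, δ''₁, hc₁, hd₁⟩ := grid_pushout σ hm z
  obtain ⟨E₂, p₂, d₂, e₂, δ''₂, hc₂, hd₂⟩ := grid_pushout σ h j
  have hz : σ.push j ξ = 0 := tw.fst.ext_vanish hS₀ hW₁.1 _
  rw [hz, pull_zero] at hd₂
  obtain ⟨b₂, -, -⟩ := split_of_realize_zero σ hd₂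
  have hE₂ : E₂ ∈ σ.tNeg S T U := by
    refine tNeg_iso_B σ b₂ ?_
    refine tNeg_biprod σ tw (W_mem_tNeg σ tw hW₁) (tNeg_biprod σ tw (S_mem_tNeg σ tw hS₀) ?_)
    exact W_mem_tNeg σ tw (zero_mem_W σ tw)
  -- transport conflation 1 to have the same inflation as conflation 2
  set θh : W₁ ⊞ Z ⟶ Z ⊞ W₁ := (biprod.braiding W₁ Z).hom ≫ (-𝟙 _) with hθh
  set θi : Z ⊞ W₁ ⟶ W₁ ⊞ Z := (-𝟙 _) ≫ (biprod.braiding W₁ Z).inv with hθi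
  have hθ1 : θh ≫ θi = 𝟙 _ := by
    simp [hθh, hθi]
  have hθ2 : θi ≫ θh = 𝟙 _ := by
    simp [hθh, hθi]
  have htrans : biprod.lift j (-z) ≫ (Iso.mk θh θi hθ1 hθ2).hom = biprod.lift z (-j) := by
    apply biprod.hom_ext <;> simp [hθh]
  have hc₁' := σ.realize_iso δ''₁ (biprod.lift j (-z)) p₁ (Iso.mk θh θi hθ1 hθ2) hc₁
  rw [htrans] at hc₁'
  obtain ⟨cE, -⟩ := cone_unique σ hc₁' hc₂
  have hE₁ : E₁ ∈ σ.tNeg S T U := tNeg_iso_B σ cE hE₂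
  have hScone : (S₁ ⊞ (0 : B)) ∈ S :=
    tw.fst.addU.biprod_mem _ _ hS₁ (zero_mem_S σ tw)
  exact tNeg_cocone_S σ tw hd₁ hE₁ hScone

/-- Existence of reflection sequences (the `P5` construction). -/
theorem exists_reflection_seq (B₀ : B) :
    ∃ (Z S₀ : B) (z : B₀ ⟶ Z) (w : Z ⟶ S₀) (ξ : σ.Ext S₀ B₀),
      σ.realize ξ z w ∧ Z ∈ σ.tPos T U V ∧ S₀ ∈ S ∧
      ∀ ⦃V₆ : B⦄, V₆ ∈ V → ∀ θ : σ.Ext B₀ V₆, ∃ θ' : σ.Ext Z V₆, σ.pull z θ' = θ := by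
  obtain ⟨VB, UB, v, g, hVB, hUB, δres, hres⟩ := tw.snd.resolve B₀
  obtain ⟨T₀, S₀, u, t, hT₀, hS₀, δT, hT⟩ := tw.fst.coresolve UB
  have hT₀U : T₀ ∈ U := by
    refine mem_U_of_vanish σ tw fun V₆ hV₆ θ => ?_
    have h1 : σ.pull u θ = 0 := tw.snd.ext_vanish hUB hV₆ _
    obtain ⟨ρ, hρ⟩ := exact_E_contra_mid σ hT h1
    rw [hρ, tw.ext_SV hS₀ hV₆ ρ, pull_zero]
  obtain ⟨Z, d, e, h', δ'', hsq, hhe, hre1, hre2, hpulld, hpushv⟩ :=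
    σ.et4 δres v g δT u t hres hT
  refine ⟨Z, S₀, d, e, σ.push g δT, hre2,
    ⟨VB, T₀, v ≫ u, h', hVB, ⟨hT₀, hT₀U⟩, δ'', hre1⟩, hS₀, ?_⟩
  intro V₆ hV₆ θ
  have h1 : σ.pull g θ = 0 := tw.snd.ext_vanish hUB hV₆ _
  obtain ⟨φ, hφ⟩ := exact_E_contra σ hres h1
  refine ⟨σ.push φ δ'', ?_⟩
  rw [pull_push, hpulld, ← hφ]

/-- Existence of coreflection sequences (dual `P5` construction). -/
theorem exists_coreflection_seq (B₀ : B) :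
    ∃ (M V₁ : B) (v : V₁ ⟶ M) (m : M ⟶ B₀) (δ : σ.Ext B₀ V₁),
      σ.realize δ v m ∧ M ∈ σ.tNeg S T U ∧ V₁ ∈ V ∧
      ∀ ⦃S₆ : B⦄, S₆ ∈ S → ∀ θ : σ.Ext S₆ B₀, ∃ θ' : σ.Ext S₆ M, σ.push m θ' = θ := by
  obtain ⟨Tb, Sb, c, g', hTb, hSb, δcor, hcor⟩ := tw.fst.coresolve B₀
  obtain ⟨V₁, U₁, v'', u'', hV₁, hU₁, δrT, hrT⟩ := tw.snd.resolve Tb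
  have hU₁T : U₁ ∈ T := by
    refine mem_T_of_vanish σ tw fun S₆ hS₆ θ => ?_
    have h1 : σ.push u'' θ = 0 := tw.fst.ext_vanish hS₆ hTb _
    obtain ⟨κ, hκ⟩ := exact_E_cov_mid σ hrT h1
    rw [hκ, tw.ext_SV hS₆ hV₁ κ, push_zero]
  obtain ⟨M, e, d, mu, δ''M, hsq, hem, hre1, hre2, hpushd, hpullg⟩ :=
    σ.et4op δrT v'' u'' δcor c g' hrT hcor
  refine ⟨M, V₁, e, d, σ.pull c δrT, hre2,
    ⟨U₁, Sb, mu, u'' ≫ g', ⟨hU₁T, hU₁⟩, hSb, δ''M, hre1⟩, hV₁, ?_⟩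
  intro S₆ hS₆ θ
  have h1 : σ.push c θ = 0 := tw.fst.ext_vanish hS₆ hTb _
  obtain ⟨k, hk⟩ := exact_E_cov σ hcor h1
  refine ⟨σ.pull k δ''M, ?_⟩
  rw [← pull_push, hpushd, ← hk]

/-- Construction of `Z₂` (reflection of `X` built from a coreflection of `X` and a
reflection of that coreflection), together with the two key surjectivity properties. -/
theorem exists_Z₂ {X M₀ V₀ Z₁ S₁ : B}
    {δc : σ.Ext X V₀} {v₀ : V₀ ⟶ M₀} {m₀ : M₀ ⟶ X} (hc : σ.realize δc v₀ m₀)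
    (hV₀ : V₀ ∈ V)
    (hMsurj : ∀ ⦃S₆ : B⦄, S₆ ∈ S → ∀ θ : σ.Ext S₆ X, ∃ θ' : σ.Ext S₆ M₀, σ.push m₀ θ' = θ)
    {ξ₁ : σ.Ext S₁ M₀} {z₁ : M₀ ⟶ Z₁} {w₁ : Z₁ ⟶ S₁} (hξ : σ.realize ξ₁ z₁ w₁)
    (hS₁ : S₁ ∈ S) (hZ₁pos : Z₁ ∈ σ.tPos T U V)
    (hZsurj : ∀ ⦃V₆ : B⦄, V₆ ∈ V → ∀ θ : σ.Ext M₀ V₆, ∃ θ' : σ.Ext Z₁ V₆, σ.pull z₁ θ' = θ) :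
    ∃ (Z₂ : B) (d : X ⟶ Z₂) (e : Z₂ ⟶ S₁) (h' : Z₁ ⟶ Z₂),
      σ.realize (σ.push m₀ ξ₁) d e ∧
      Z₂ ∈ σ.tPos T U V ∧
      z₁ ≫ h' = m₀ ≫ d ∧
      (∃ δ'' : σ.Ext Z₂ V₀, σ.realize δ'' (v₀ ≫ z₁) h') ∧
      (∀ ⦃V₆ : B⦄, V₆ ∈ V → ∀ θ : σ.Ext X V₆, ∃ Θ : σ.Ext Z₂ V₆, σ.pull d Θ = θ) ∧
      (∀ ⦃S₆ : B⦄, S₆ ∈ S → ∀ ζ : σ.Ext S₆ Z₂, ∃ ν : σ.Ext S₆ Z₁, σ.push h' ν = ζ) := by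
  obtain ⟨Z₂, d, e, h', δ'', hsq, hhe, hre1, hre2, hpulld, hpushv⟩ :=
    σ.et4 δc v₀ m₀ ξ₁ z₁ w₁ hc hξ
  have hZ₂pos : Z₂ ∈ σ.tPos T U V := tPos_cone_V σ tw hre1 hV₀ hZ₁pos
  refine ⟨Z₂, d, e, h', hre2, hZ₂pos, hsq, ⟨δ'', hre1⟩, ?_, ?_⟩
  · -- (γ): E-surjectivity of the reflection sequence `X ↣ Z₂ ↠ S₁` onto `E(X, V)`
    intro V₆ hV₆ θ
    obtain ⟨θA, hθA⟩ := hZsurj hV₆ (σ.pull m₀ θ)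
    have h0 : σ.pull (v₀ ≫ z₁) θA = 0 := by
      rw [← pull_pull, hθA, pull_pull, comp_eq_zero σ hc, pull_zero_mor]
    obtain ⟨Θ₀, hΘ₀⟩ := exact_E_contra_mid σ hre1 h0
    have hζ : σ.pull m₀ (σ.pull d Θ₀ - θ) = 0 := by
      rw [pull_sub, pull_pull, ← hsq, ← pull_pull, ← hΘ₀, hθA, sub_self]
    obtain ⟨φ, hφ⟩ := exact_E_contra σ hc hζ
    refine ⟨Θ₀ - σ.push φ δ'', ?_⟩
    rw [pull_sub, pull_push, hpulld, ← hφ]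
    abel
  · -- (SURJ*): E-surjectivity of `h' : Z₁ ⟶ Z₂` onto `E(S₆, Z₂)`
    intro S₆ hS₆ ζ
    obtain ⟨Qζ, aζ, bζ, hζre⟩ := σ.realize_ex ζ
    obtain ⟨Eh, dh, eh, hh, δh, hsq2, hhe2, hre3, hre4, hpulld2, hpushd2⟩ :=
      σ.et4 (σ.push m₀ ξ₁) d e ζ aζ bζ hre2 hζre
    have hES : Eh ∈ S := mem_S_of_conf σ tw hre4 hS₁ hS₆
    obtain ⟨δh₁, hδh₁⟩ := hMsurj hES δh
    have hξ' : σ.push m₀ (σ.pull dh δh₁ - ξ₁) = 0 := by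
      rw [push_sub, ← pull_push, hδh₁, hpulld2, sub_self]
    obtain ⟨ρ, hρ⟩ := exact_E_cov_mid σ hc hξ'
    have hdh : σ.pull dh δh₁ = ξ₁ := by
      rw [tw.ext_SV hS₁ hV₀ ρ, push_zero] at hρ
      rwa [sub_eq_zero] at hρ
    have hν0 : σ.pull dh (σ.push z₁ δh₁) = 0 := by
      rw [pull_push, hdh, push_self σ hξ]
    obtain ⟨ν, hν⟩ := exact_E_contra_mid σ hre4 hν0
    have hμ : σ.pull eh (ζ - σ.push h' ν) = 0 := by
      rw [pull_sub, pull_push, ← hν, push_push, hsq, ← push_push, hδh₁, hpushd2, sub_self]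
    obtain ⟨t, ht⟩ := exact_E_contra σ hre4 hμ
    obtain ⟨Vz, Wz, fz, rz, hVz, hWz, δz, hzre⟩ := hZ₂pos
    have htz : σ.pull t δz = 0 := tw.ext_SV hS₁ hVz _
    obtain ⟨tl, htl⟩ := lift_of_pull_zero σ hzre htz
    have hpt : σ.push t (σ.push e ζ) = 0 := by
      rw [← htl, ← push_push, tw.fst.ext_vanish hS₆ hWz.1 (σ.push tl (σ.push e ζ)),
        push_zero]
    have hz0 : ζ - σ.push h' ν = 0 := by rw [ht, hpt]
    exact ⟨ν, (sub_eq_zero.mp hz0).symm⟩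

omit tw in
theorem push_sub_mor {C A A' : B} (a a' : A ⟶ A') (δ : σ.Ext C A) :
    σ.push (a - a') δ = σ.push a δ - σ.push a' δ := by
  haveI := σ.additive_fst (op C)
  show (σ.E.obj (op C)).map (a - a') δ = _
  rw [Functor.map_sub]
  rfl

/-! ### Quotient category infrastructure -/

theorem addClosed_W : AddClosed (T ∩ U : Set B) where
  zero_mem Z hZ := ⟨tw.fst.addV.zero_mem Z hZ, tw.snd.addU.zero_mem Z hZ⟩
  biprod_mem X Y hX hY := ⟨tw.fst.addV.biprod_mem X Y hX.1 hY.1,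
    tw.snd.addU.biprod_mem X Y hX.2 hY.2⟩
  summand_mem X Y hY s r hsr := ⟨tw.fst.addV.summand_mem X Y hY.1 s r hsr,
    tw.snd.addU.summand_mem X Y hY.2 s r hsr⟩

omit σ tw in
/-- The subgroup of morphisms factoring through an object of an additively closed class. -/
def factorSub {W' : Set B} (hW : AddClosed W') (X Y : B) : AddSubgroup (X ⟶ Y) where
  carrier := {f | ∃ K ∈ W', ∃ p : X ⟶ K, ∃ q : K ⟶ Y, f = p ≫ q}
  zero_mem' := ⟨0, hW.zero_mem 0 (isZero_zero B), 0, 0, by simp⟩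
  add_mem' := by
    rintro f g ⟨K₁, hK₁, p₁, q₁, rfl⟩ ⟨K₂, hK₂, p₂, q₂, rfl⟩
    exact ⟨K₁ ⊞ K₂, hW.biprod_mem _ _ hK₁ hK₂, biprod.lift p₁ p₂, biprod.desc q₁ q₂,
      by rw [biprod.lift_desc]⟩
  neg_mem' := by
    rintro f ⟨K, hK, p, q, rfl⟩
    exact ⟨K, hK, -p, q, by simp⟩

omit σ tw in
theorem mem_wIdeal_iff {W' : Set B} (hW : AddClosed W') {X Y : B} {f : X ⟶ Y} :
    f ∈ wIdeal W' X Y ↔ ∃ K ∈ W', ∃ p : X ⟶ K, ∃ q : K ⟶ Y, f = p ≫ q := by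
  constructor
  · intro hf
    have hle : wIdeal W' X Y ≤ factorSub hW X Y := by
      rw [wIdeal]
      exact AddSubgroup.closure_le _ |>.mpr (fun g hg => hg)
    exact hle hf
  · rintro ⟨K, hK, p, q, hpq⟩
    exact AddSubgroup.subset_closure ⟨K, hK, p, q, hpq⟩

omit σ tw in
theorem mem_wIdeal_of_factor {W' : Set B} {X Y : B} {f : X ⟶ Y}
    (h : ∃ K ∈ W', ∃ p : X ⟶ K, ∃ q : K ⟶ Y, f = p ≫ q) : f ∈ wIdeal W' X Y := by
  obtain ⟨K, hK, p, q, hpq⟩ := h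
  exact AddSubgroup.subset_closure ⟨K, hK, p, q, hpq⟩

omit σ tw in
theorem bar_eq_iff {W' : Set B} {X Y : B} (f g : X ⟶ Y) :
    (toQuot W').map f = (toQuot W').map g ↔ f - g ∈ wIdeal W' X Y := by
  rw [Quotient.functor_map_eq_iff]
  rfl

omit σ tw in
theorem bar_surj {W' : Set B} {Xq Yq : QuotCat W'} (f : Xq ⟶ Yq) :
    ∃ g : Xq.as ⟶ Yq.as, (toQuot W').map g = f :=
  Quot.exists_rep f

omit σ tw in
theorem bar_surj' {W' : Set B} {X : B} {Yq : QuotCat W'} (f : (toQuot W').obj X ⟶ Yq) :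
    ∃ g : X ⟶ Yq.as, (toQuot W').map g = f :=
  Quot.exists_rep f

omit σ tw in
theorem bar_surj'' {W' : Set B} {Xq : QuotCat W'} {Y : B} (f : Xq ⟶ (toQuot W').obj Y) :
    ∃ g : Xq.as ⟶ Y, (toQuot W').map g = f :=
  Quot.exists_rep f

omit σ tw in
/-- A sum of two `W`-factoring morphisms lies in the ideal. -/
theorem mem_wIdeal_add {W' : Set B} {X Y : B} {f g : X ⟶ Y}
    (hf : ∃ K ∈ W', ∃ p : X ⟶ K, ∃ q : K ⟶ Y, f = p ≫ q)
    (hg : ∃ K ∈ W', ∃ p : X ⟶ K, ∃ q : K ⟶ Y, g = p ≫ q) :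
    f + g ∈ wIdeal W' X Y :=
  AddSubgroup.add_mem _ (mem_wIdeal_of_factor hf) (mem_wIdeal_of_factor hg)

/-- The reflection-sequence Hom-bijection in the quotient category (`F2`). -/
theorem F2_bij {B₀ Z S₀ : B} {ξ : σ.Ext S₀ B₀} {z : B₀ ⟶ Z} {w : Z ⟶ S₀}
    (h : σ.realize ξ z w) (hS₀ : S₀ ∈ S)
    (hsurj : ∀ ⦃V₆ : B⦄, V₆ ∈ V → ∀ θ : σ.Ext B₀ V₆, ∃ θ' : σ.Ext Z V₆, σ.pull z θ' = θ)
    (Yq : QuotCat (T ∩ U : Set B)) (hY : Yq.as ∈ σ.tPos T U V) :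
    Function.Bijective (fun g : (toQuot (T ∩ U : Set B)).obj Z ⟶ Yq =>
      (toQuot (T ∩ U : Set B)).map z ≫ g) := by
  obtain ⟨V₁, W₁, j, q, hV₁, hW₁, θY, hYre⟩ := hY
  constructor
  · intro g₁ g₂ hg
    obtain ⟨a₁, rfl⟩ := bar_surj' g₁
    obtain ⟨a₂, rfl⟩ := bar_surj' g₂
    simp only at hg
    rw [← Functor.map_comp, ← Functor.map_comp, bar_eq_iff, ← Preadditive.comp_sub] at hg
    obtain ⟨K, hK, r, s, hrs⟩ := (mem_wIdeal_iff (addClosed_W σ tw)).mp hg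
    have hpr : σ.push r ξ = 0 := tw.fst.ext_vanish hS₀ hK.1 _
    obtain ⟨rt, hrt⟩ := extend_of_push_zero σ h hpr
    have hz0 : z ≫ ((a₁ - a₂) - rt ≫ s) = 0 := by
      rw [Preadditive.comp_sub, hrs, ← Category.assoc, hrt, sub_self]
    obtain ⟨k, hk⟩ := weak_coker σ h hz0
    have hpk : σ.pull k θY = 0 := tw.ext_SV hS₀ hV₁ _
    obtain ⟨l, hl⟩ := lift_of_pull_zero σ hYre hpk
    rw [bar_eq_iff]
    have hdecomp : a₁ - a₂ = rt ≫ s + (w ≫ l) ≫ q := by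
      rw [Category.assoc, hl, hk]
      abel
    rw [hdecomp]
    exact mem_wIdeal_add ⟨K, hK, rt, s, rfl⟩ ⟨W₁, hW₁, w ≫ l, q, rfl⟩
  · intro fq
    obtain ⟨f, rfl⟩ := bar_surj' fq
    obtain ⟨θ', hθ'⟩ := hsurj hV₁ (σ.pull f θY)
    have h1 : σ.pull z (σ.push j θ') = 0 := by
      rw [pull_push, hθ', ← pull_push, push_self σ hYre, pull_zero]
    obtain ⟨ρ, hρ⟩ := exact_E_contra_mid σ h h1
    rw [tw.fst.ext_vanish hS₀ hW₁.1 ρ, pull_zero] at hρ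
    obtain ⟨g₁, hg₁⟩ := exact_E_cov σ hYre hρ
    have h2 : σ.pull (f - z ≫ g₁) θY = 0 := by
      rw [pull_sub_mor, ← pull_pull, ← hg₁, hθ', sub_self]
    obtain ⟨l, hl⟩ := lift_of_pull_zero σ hYre h2
    refine ⟨(toQuot (T ∩ U : Set B)).map g₁, ?_⟩
    show (toQuot (T ∩ U : Set B)).map z ≫ (toQuot _).map g₁ = (toQuot _).map f
    rw [← Functor.map_comp, bar_eq_iff]
    refine mem_wIdeal_of_factor ⟨W₁, hW₁, -l, q, ?_⟩
    rw [Preadditive.neg_comp, hl]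
    abel

/-- The coreflection-sequence Hom-bijection in the quotient category (`F2'`). -/
theorem F2'_bij {Y M V₁ : B} {δM : σ.Ext Y V₁} {v : V₁ ⟶ M} {m : M ⟶ Y}
    (h : σ.realize δM v m) (hV₁ : V₁ ∈ V)
    (hsurj : ∀ ⦃S₆ : B⦄, S₆ ∈ S → ∀ θ : σ.Ext S₆ Y, ∃ θ' : σ.Ext S₆ M, σ.push m θ' = θ)
    (Xq : QuotCat (T ∩ U : Set B)) (hX : Xq.as ∈ σ.tNeg S T U) :
    Function.Bijective (fun g : Xq ⟶ (toQuot (T ∩ U : Set B)).obj M =>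
      g ≫ (toQuot (T ∩ U : Set B)).map m) := by
  obtain ⟨W₂, S₂, j₂, q₂, hW₂, hS₂, θX, hXre⟩ := hX
  constructor
  · intro g₁ g₂ hg
    obtain ⟨a₁, rfl⟩ := bar_surj'' g₁
    obtain ⟨a₂, rfl⟩ := bar_surj'' g₂
    simp only at hg
    rw [← Functor.map_comp, ← Functor.map_comp, bar_eq_iff, ← Preadditive.sub_comp] at hg
    obtain ⟨K, hK, r, s, hrs⟩ := (mem_wIdeal_iff (addClosed_W σ tw)).mp hg
    have hps : σ.pull s δM = 0 := tw.snd.ext_vanish hK.2 hV₁ _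
    obtain ⟨st, hst⟩ := lift_of_pull_zero σ h hps
    have hz0 : ((a₁ - a₂) - r ≫ st) ≫ m = 0 := by
      rw [Preadditive.sub_comp, hrs, Category.assoc, hst, sub_self]
    obtain ⟨k, hk⟩ := weak_ker σ h hz0
    have hpk : σ.push k θX = 0 := tw.ext_SV hS₂ hV₁ _
    obtain ⟨l, hl⟩ := extend_of_push_zero σ hXre hpk
    rw [bar_eq_iff]
    have hdecomp : a₁ - a₂ = r ≫ st + j₂ ≫ (l ≫ v) := by
      rw [← Category.assoc, hl, hk]
      abel
    rw [hdecomp]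
    exact mem_wIdeal_add ⟨K, hK, r, st, rfl⟩ ⟨W₂, hW₂, j₂, l ≫ v, rfl⟩
  · intro fq
    obtain ⟨f, rfl⟩ := bar_surj'' fq
    obtain ⟨θ', hθ'⟩ := hsurj hS₂ (σ.push f θX)
    have h1 : σ.push m (σ.pull q₂ θ') = 0 := by
      rw [← pull_push, hθ', pull_push, pull_self σ hXre, push_zero]
    obtain ⟨ρ, hρ⟩ := exact_E_cov_mid σ h h1
    rw [tw.snd.ext_vanish hW₂.2 hV₁ ρ, push_zero] at hρ
    obtain ⟨g₁, hg₁⟩ := exact_E_contra σ hXre hρ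
    have h2 : σ.push (f - g₁ ≫ m) θX = 0 := by
      rw [push_sub_mor, ← push_push, ← hg₁, hθ', sub_self]
    obtain ⟨l, hl⟩ := extend_of_push_zero σ hXre h2
    refine ⟨(toQuot (T ∩ U : Set B)).map g₁, ?_⟩
    show (toQuot (T ∩ U : Set B)).map g₁ ≫ (toQuot _).map m = (toQuot _).map f
    rw [← Functor.map_comp, bar_eq_iff]
    refine mem_wIdeal_of_factor ⟨W₂, hW₂, j₂, -l, ?_⟩
    rw [Preadditive.comp_neg, hl]
    abel

/-- `tNeg` membership transfers along isomorphisms in the quotient category. -/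
theorem tNeg_iso_quot {A : B} (hA : A ∈ σ.tNeg S T U) {Oq : QuotCat (T ∩ U : Set B)}
    (e : (toQuot (T ∩ U : Set B)).obj A ≅ Oq) : Oq.as ∈ σ.tNeg S T U := by
  obtain ⟨f, hf⟩ := bar_surj' e.hom
  obtain ⟨g, hg⟩ := bar_surj'' e.inv
  have hcomp : (toQuot (T ∩ U : Set B)).map (g ≫ f) = (toQuot _).map (𝟙 Oq.as) := by
    rw [Functor.map_comp, hg, hf, CategoryTheory.Functor.map_id]
    exact e.inv_hom_id
  rw [bar_eq_iff] at hcomp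
  obtain ⟨K, hK, p, q, hpq⟩ := (mem_wIdeal_iff (addClosed_W σ tw)).mp hcomp
  have hrs : biprod.lift g p ≫ biprod.desc f (-q) = 𝟙 Oq.as := by
    rw [biprod.lift_desc, Preadditive.comp_neg, ← hpq]
    abel
  set r : Oq.as ⟶ A ⊞ K := biprod.lift g p with hr
  set s : A ⊞ K ⟶ Oq.as := biprod.desc f (-q) with hs
  have hN : (A ⊞ K) ∈ σ.tNeg S T U :=
    tNeg_biprod σ tw hA (W_mem_tNeg σ tw hK)
  obtain ⟨WN, SN, n, qN, hWN, hSN, δN, hNre⟩ := hN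
  obtain ⟨T', S', c', w', hT', hS', δ', hre'⟩ := tw.fst.coresolve Oq.as
  obtain ⟨u, hu⟩ := extend_of_push_zero σ hNre
    (f := s ≫ c') (tw.fst.ext_vanish hSN hT' _)
  obtain ⟨wm, hwm⟩ := extend_of_push_zero σ hre'
    (f := r ≫ n) (tw.fst.ext_vanish hS' hWN.1 _)
  have hcc : c' ≫ (wm ≫ u - 𝟙 T') = 0 := by
    have h1 : c' ≫ wm ≫ u = r ≫ s ≫ c' := by
      rw [← Category.assoc, hwm, Category.assoc, hu]
    rw [Preadditive.comp_sub, h1, ← Category.assoc, hrs, Category.id_comp,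
      Category.comp_id, sub_self]
  obtain ⟨s₂, hs₂⟩ := weak_coker σ hre' hcc
  have hT'U : T' ∈ U := by
    refine mem_U_of_vanish σ tw ?_
    intro V₆ hV₆ θ
    have hone : (𝟙 T') = wm ≫ u - w' ≫ s₂ := by rw [hs₂]; abel
    have step1 : θ = σ.pull (wm ≫ u) θ - σ.pull (w' ≫ s₂) θ := by
      conv_lhs => rw [← pull_id σ θ, hone]
      rw [pull_sub_mor]
    rw [step1, ← pull_pull, ← pull_pull, tw.snd.ext_vanish hWN.2 hV₆ (σ.pull u θ),
      tw.ext_SV hS' hV₆ (σ.pull s₂ θ), pull_zero, pull_zero, sub_self]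
  exact ⟨T', S', c', w', ⟨hT', hT'U⟩, hS', δ', hre'⟩

/-- The per-object master lemma: `σ⁺σ⁻X` lies (strictly) in `tNeg`, and there is a
canonical comparison morphism `τ₀ : σ⁺σ⁻X ⟶ σ⁻σ⁺X` (characterised by compatibility with
the counit) which is an isomorphism. -/
theorem master (rd : ReflectorData (B := B) (T ∩ U) (σ.tPos T U V))
    (cd : CoreflectorData (B := B) (T ∩ U) (σ.tNeg S T U))
    (Xq : QuotCat (T ∩ U : Set B)) :
    (rd.σp.obj (cd.σm.obj Xq)).as ∈ σ.tNeg S T U ∧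
    ∃ (τ₀ : rd.σp.obj (cd.σm.obj Xq) ⟶ cd.σm.obj (rd.σp.obj Xq))
      (ρ : cd.σm.obj (rd.σp.obj Xq) ⟶ rd.σp.obj (cd.σm.obj Xq)),
      τ₀ ≫ cd.counit.app (rd.σp.obj Xq) = rd.σp.map (cd.counit.app Xq) ∧
      τ₀ ≫ ρ = 𝟙 _ ∧ ρ ≫ τ₀ = 𝟙 _ := by
  classical
  obtain ⟨M₀, V₀, v₀, m₀, δc, hcre, hM₀neg, hV₀, hMsurj⟩ := exists_coreflection_seq σ tw Xq.as
  obtain ⟨Z₁, S₁, z₁, w₁, ξ₁, hξre, hZ₁pos, hS₁, hZsurj⟩ := exists_reflection_seq σ tw M₀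
  have hZ₁neg : Z₁ ∈ σ.tNeg S T U := tNeg_of_reflection σ tw hξre hS₁ hM₀neg
  obtain ⟨Z₂, d, e, h', hZ₂re, hZ₂pos, hsq, ⟨δ'', hδ''⟩, hγ, hSURJ⟩ :=
    exists_Z₂ σ tw hcre hV₀ hMsurj hξre hS₁ hZ₁pos hZsurj
  -- `i₁ : σ⁻ Xq ≅ M̄₀`
  obtain ⟨a₁, ha₁⟩ := (F2'_bij σ tw hcre hV₀ hMsurj (cd.σm.obj Xq) (cd.mem Xq)).2
    (cd.counit.app Xq)
  have ha₁' : a₁ ≫ (toQuot (T ∩ U : Set B)).map m₀ = cd.counit.app Xq := ha₁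
  obtain ⟨b₁, hb₁⟩ := (cd.bij ((toQuot (T ∩ U : Set B)).obj M₀) Xq hM₀neg).2
    ((toQuot (T ∩ U : Set B)).map m₀)
  have hb₁' : b₁ ≫ cd.counit.app Xq = (toQuot (T ∩ U : Set B)).map m₀ := hb₁
  have hab : a₁ ≫ b₁ = 𝟙 (cd.σm.obj Xq) := by
    apply (cd.bij (cd.σm.obj Xq) Xq (cd.mem Xq)).1
    show (a₁ ≫ b₁) ≫ cd.counit.app Xq = 𝟙 _ ≫ cd.counit.app Xq
    rw [Category.assoc, hb₁', Category.id_comp, ha₁']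
  have hba : b₁ ≫ a₁ = 𝟙 ((toQuot (T ∩ U : Set B)).obj M₀) := by
    apply (F2'_bij σ tw hcre hV₀ hMsurj ((toQuot (T ∩ U : Set B)).obj M₀) hM₀neg).1
    show (b₁ ≫ a₁) ≫ (toQuot (T ∩ U : Set B)).map m₀ = 𝟙 _ ≫ (toQuot _).map m₀
    rw [Category.assoc, ha₁', Category.id_comp, hb₁']
  -- `i_Z : σ⁺ M̄₀ ≅ Z̄₁`
  obtain ⟨zh, hzh⟩ := (rd.bij ((toQuot (T ∩ U : Set B)).obj M₀)
    ((toQuot (T ∩ U : Set B)).obj Z₁) hZ₁pos).2 ((toQuot (T ∩ U : Set B)).map z₁)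
  have hzh' : rd.unit.app ((toQuot (T ∩ U : Set B)).obj M₀) ≫ zh
      = (toQuot (T ∩ U : Set B)).map z₁ := hzh
  obtain ⟨zi, hzi⟩ := (F2_bij σ tw hξre hS₁ hZsurj
    (rd.σp.obj ((toQuot (T ∩ U : Set B)).obj M₀)) (rd.mem _)).2
    (rd.unit.app ((toQuot (T ∩ U : Set B)).obj M₀))
  have hzi' : (toQuot (T ∩ U : Set B)).map z₁ ≫ zi
      = rd.unit.app ((toQuot (T ∩ U : Set B)).obj M₀) := hzi
  have hzz : zh ≫ zi = 𝟙 (rd.σp.obj ((toQuot (T ∩ U : Set B)).obj M₀)) := by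
    apply (rd.bij ((toQuot (T ∩ U : Set B)).obj M₀)
      (rd.σp.obj ((toQuot (T ∩ U : Set B)).obj M₀)) (rd.mem _)).1
    show rd.unit.app _ ≫ zh ≫ zi = rd.unit.app _ ≫ 𝟙 _
    rw [← Category.assoc, hzh', hzi', Category.comp_id]
  have hzz2 : zi ≫ zh = 𝟙 ((toQuot (T ∩ U : Set B)).obj Z₁) := by
    apply (F2_bij σ tw hξre hS₁ hZsurj ((toQuot (T ∩ U : Set B)).obj Z₁) hZ₁pos).1
    show (toQuot (T ∩ U : Set B)).map z₁ ≫ zi ≫ zh = (toQuot _).map z₁ ≫ 𝟙 _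
    rw [← Category.assoc, hzi', hzh', Category.comp_id]
  -- `i₂' : σ⁺σ⁻ Xq ≅ Z̄₁`
  set ih : rd.σp.obj (cd.σm.obj Xq) ⟶ (toQuot (T ∩ U : Set B)).obj Z₁ :=
    rd.σp.map a₁ ≫ zh with hih
  set ii : (toQuot (T ∩ U : Set B)).obj Z₁ ⟶ rd.σp.obj (cd.σm.obj Xq) :=
    zi ≫ rd.σp.map b₁ with hii
  have hihii : ih ≫ ii = 𝟙 (rd.σp.obj (cd.σm.obj Xq)) := by
    rw [hih, hii, Category.assoc, ← Category.assoc zh, hzz, Category.id_comp,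
      ← Functor.map_comp, hab, CategoryTheory.Functor.map_id]
  have hiiih : ii ≫ ih = 𝟙 ((toQuot (T ∩ U : Set B)).obj Z₁) := by
    rw [hii, hih, Category.assoc, ← Category.assoc (rd.σp.map b₁), ← Functor.map_comp, hba,
      CategoryTheory.Functor.map_id, Category.id_comp, hzz2]
  have mem1 : (rd.σp.obj (cd.σm.obj Xq)).as ∈ σ.tNeg S T U :=
    tNeg_iso_quot σ tw hZ₁neg ⟨ii, ih, hiiih, hihii⟩
  refine ⟨mem1, ?_⟩
  -- `τ₀`
  obtain ⟨τ₀, hτ₀⟩ := (cd.bij (rd.σp.obj (cd.σm.obj Xq)) (rd.σp.obj Xq) mem1).2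
    (rd.σp.map (cd.counit.app Xq))
  have hτ₀' : τ₀ ≫ cd.counit.app (rd.σp.obj Xq) = rd.σp.map (cd.counit.app Xq) := hτ₀
  -- `i₃ : σ⁺ Xq ≅ Z̄₂`
  obtain ⟨dh, hdh⟩ := (rd.bij Xq ((toQuot (T ∩ U : Set B)).obj Z₂) hZ₂pos).2
    ((toQuot (T ∩ U : Set B)).map d)
  have hdh' : rd.unit.app Xq ≫ dh = (toQuot (T ∩ U : Set B)).map d := hdh
  obtain ⟨di, hdi⟩ := (F2_bij σ tw hZ₂re hS₁ hγ (rd.σp.obj Xq) (rd.mem Xq)).2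
    (rd.unit.app Xq)
  have hdi' : (toQuot (T ∩ U : Set B)).map d ≫ di = rd.unit.app Xq := hdi
  have hdd : dh ≫ di = 𝟙 (rd.σp.obj Xq) := by
    apply (rd.bij Xq (rd.σp.obj Xq) (rd.mem Xq)).1
    show rd.unit.app Xq ≫ dh ≫ di = rd.unit.app Xq ≫ 𝟙 _
    rw [← Category.assoc, hdh', hdi', Category.comp_id]
  have hdd2 : di ≫ dh = 𝟙 ((toQuot (T ∩ U : Set B)).obj Z₂) := by
    apply (F2_bij σ tw hZ₂re hS₁ hγ ((toQuot (T ∩ U : Set B)).obj Z₂) hZ₂pos).1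
    show (toQuot (T ∩ U : Set B)).map d ≫ di ≫ dh = (toQuot _).map d ≫ 𝟙 _
    rw [← Category.assoc, hdi', hdh', Category.comp_id]
  -- `Φ` and `Ψ`
  obtain ⟨Ψ, hΨ⟩ := (F2'_bij σ tw hδ'' hV₀ hSURJ
    (cd.σm.obj ((toQuot (T ∩ U : Set B)).obj Z₂)) (cd.mem _)).2
    (cd.counit.app ((toQuot (T ∩ U : Set B)).obj Z₂))
  have hΨ' : Ψ ≫ (toQuot (T ∩ U : Set B)).map h'
      = cd.counit.app ((toQuot (T ∩ U : Set B)).obj Z₂) := hΨ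
  -- `ρ`
  set ρ : cd.σm.obj (rd.σp.obj Xq) ⟶ rd.σp.obj (cd.σm.obj Xq) :=
    cd.σm.map dh ≫ Ψ ≫ ii with hρdef
  -- sub1
  have sub1 : rd.unit.app (cd.σm.obj Xq) ≫ τ₀ = cd.σm.map (rd.unit.app Xq) := by
    apply (cd.bij (cd.σm.obj Xq) (rd.σp.obj Xq) (cd.mem Xq)).1
    show (rd.unit.app _ ≫ τ₀) ≫ cd.counit.app _
        = cd.σm.map (rd.unit.app Xq) ≫ cd.counit.app _
    rw [Category.assoc, hτ₀', ← rd.unit.naturality, cd.counit.naturality]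
    simp
  -- sub3
  have sub3 : cd.σm.map ((toQuot (T ∩ U : Set B)).map d) ≫ Ψ
      = a₁ ≫ (toQuot (T ∩ U : Set B)).map z₁ := by
    apply (F2'_bij σ tw hδ'' hV₀ hSURJ (cd.σm.obj Xq) (cd.mem Xq)).1
    show (cd.σm.map ((toQuot (T ∩ U : Set B)).map d) ≫ Ψ) ≫ (toQuot _).map h'
        = (a₁ ≫ (toQuot _).map z₁) ≫ (toQuot _).map h'
    have L : (cd.σm.map ((toQuot (T ∩ U : Set B)).map d) ≫ Ψ) ≫ (toQuot _).map h'
        = cd.counit.app Xq ≫ (toQuot (T ∩ U : Set B)).map d := by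
      rw [Category.assoc, hΨ']
      have hnat := cd.counit.naturality ((toQuot (T ∩ U : Set B)).map d)
      rw [Functor.id_map] at hnat
      exact hnat
    have R : (a₁ ≫ (toQuot (T ∩ U : Set B)).map z₁) ≫ (toQuot _).map h'
        = cd.counit.app Xq ≫ (toQuot (T ∩ U : Set B)).map d := by
      rw [Category.assoc, ← Functor.map_comp, hsq, Functor.map_comp, ← Category.assoc, ha₁']
    rw [L, R]
  -- (b1)
  have b1 : τ₀ ≫ ρ = 𝟙 (rd.σp.obj (cd.σm.obj Xq)) := by
    apply (rd.bij (cd.σm.obj Xq) (rd.σp.obj (cd.σm.obj Xq)) (rd.mem _)).1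
    show rd.unit.app _ ≫ τ₀ ≫ ρ = rd.unit.app _ ≫ 𝟙 _
    rw [Category.comp_id, ← Category.assoc, sub1]
    calc cd.σm.map (rd.unit.app Xq) ≫ ρ
        = cd.σm.map (rd.unit.app Xq ≫ dh) ≫ (Ψ ≫ ii) := by
          rw [hρdef, Functor.map_comp]
          simp only [Category.assoc]
      _ = (cd.σm.map ((toQuot (T ∩ U : Set B)).map d) ≫ Ψ) ≫ ii := by
          rw [hdh']
          simp only [Category.assoc]
      _ = (a₁ ≫ (toQuot (T ∩ U : Set B)).map z₁) ≫ ii := by rw [sub3]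
      _ = a₁ ≫ ((toQuot (T ∩ U : Set B)).map z₁ ≫ zi) ≫ rd.σp.map b₁ := by
          rw [hii]
          simp only [Category.assoc]
      _ = a₁ ≫ rd.unit.app ((toQuot (T ∩ U : Set B)).obj M₀) ≫ rd.σp.map b₁ := by
          rw [hzi']
      _ = a₁ ≫ b₁ ≫ rd.unit.app (cd.σm.obj Xq) := by
          rw [← rd.unit.naturality b₁]
          simp
      _ = rd.unit.app (cd.σm.obj Xq) := by rw [← Category.assoc, hab, Category.id_comp]
  -- sub5 : `χ = h̄'`
  have sub5 : (ii ≫ rd.σp.map (cd.counit.app Xq)) ≫ dh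
      = (toQuot (T ∩ U : Set B)).map h' := by
    apply (F2_bij σ tw hξre hS₁ hZsurj ((toQuot (T ∩ U : Set B)).obj Z₂) hZ₂pos).1
    show (toQuot (T ∩ U : Set B)).map z₁ ≫ (ii ≫ rd.σp.map (cd.counit.app Xq)) ≫ dh
        = (toQuot _).map z₁ ≫ (toQuot _).map h'
    have e1 : (toQuot (T ∩ U : Set B)).map z₁ ≫ ii
        = b₁ ≫ rd.unit.app (cd.σm.obj Xq) := by
      rw [hii, ← Category.assoc, hzi', ← rd.unit.naturality b₁]
      simp
    have e2 : rd.unit.app (cd.σm.obj Xq) ≫ rd.σp.map (cd.counit.app Xq)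
        = cd.counit.app Xq ≫ rd.unit.app Xq := by
      rw [← rd.unit.naturality]
      simp
    calc (toQuot (T ∩ U : Set B)).map z₁ ≫ (ii ≫ rd.σp.map (cd.counit.app Xq)) ≫ dh
        = ((toQuot (T ∩ U : Set B)).map z₁ ≫ ii) ≫ rd.σp.map (cd.counit.app Xq) ≫ dh := by
          simp only [Category.assoc]
      _ = b₁ ≫ (rd.unit.app (cd.σm.obj Xq) ≫ rd.σp.map (cd.counit.app Xq)) ≫ dh := by
          rw [e1]
          simp only [Category.assoc]
      _ = b₁ ≫ (cd.counit.app Xq ≫ rd.unit.app Xq) ≫ dh := by rw [e2]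
      _ = b₁ ≫ cd.counit.app Xq ≫ (toQuot (T ∩ U : Set B)).map d := by
          rw [Category.assoc, hdh']
      _ = ((toQuot (T ∩ U : Set B)).map m₀) ≫ (toQuot (T ∩ U : Set B)).map d := by
          rw [← Category.assoc, hb₁']
      _ = (toQuot (T ∩ U : Set B)).map z₁ ≫ (toQuot _).map h' := by
          rw [← Functor.map_comp, ← hsq, Functor.map_comp]
  have sub6 : ii ≫ rd.σp.map (cd.counit.app Xq) = (toQuot (T ∩ U : Set B)).map h' ≫ di := by
    calc ii ≫ rd.σp.map (cd.counit.app Xq)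
        = (ii ≫ rd.σp.map (cd.counit.app Xq)) ≫ dh ≫ di := by
          rw [hdd]; exact (Category.comp_id _).symm
      _ = ((ii ≫ rd.σp.map (cd.counit.app Xq)) ≫ dh) ≫ di := by
          simp only [Category.assoc]
      _ = (toQuot (T ∩ U : Set B)).map h' ≫ di := by rw [sub5]
  -- (b2)
  have b2 : ρ ≫ τ₀ = 𝟙 (cd.σm.obj (rd.σp.obj Xq)) := by
    apply (cd.bij (cd.σm.obj (rd.σp.obj Xq)) (rd.σp.obj Xq) (cd.mem _)).1
    show (ρ ≫ τ₀) ≫ cd.counit.app _ = 𝟙 _ ≫ cd.counit.app _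
    rw [Category.id_comp, Category.assoc, hτ₀', hρdef]
    calc (cd.σm.map dh ≫ Ψ ≫ ii) ≫ rd.σp.map (cd.counit.app Xq)
        = cd.σm.map dh ≫ Ψ ≫ (ii ≫ rd.σp.map (cd.counit.app Xq)) := by
          simp only [Category.assoc]
      _ = cd.σm.map dh ≫ (Ψ ≫ (toQuot (T ∩ U : Set B)).map h') ≫ di := by
          rw [sub6]
          simp only [Category.assoc]
      _ = cd.σm.map dh ≫ cd.counit.app ((toQuot (T ∩ U : Set B)).obj Z₂) ≫ di := by
          rw [hΨ']
      _ = (cd.counit.app (rd.σp.obj Xq) ≫ dh) ≫ di := by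
          rw [← Category.assoc]
          congr 1
          have hnat := cd.counit.naturality dh
          rw [Functor.id_map] at hnat
          exact hnat
      _ = cd.counit.app (rd.σp.obj Xq) := by
          rw [Category.assoc, hdd]; exact Category.comp_id _
  exact ⟨τ₀, ρ, hτ₀', b1, b2⟩

/-- The natural isomorphism `σ⁺ ∘ σ⁻ ≅ σ⁻ ∘ σ⁺`. -/
theorem main (rd : ReflectorData (B := B) (T ∩ U) (σ.tPos T U V))
    (cd : CoreflectorData (B := B) (T ∩ U) (σ.tNeg S T U)) :
    Nonempty ((cd.σm ⋙ rd.σp) ≅ (rd.σp ⋙ cd.σm)) := by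
  classical
  have mem1 : ∀ Xq : QuotCat (T ∩ U : Set B),
      (rd.σp.obj (cd.σm.obj Xq)).as ∈ σ.tNeg S T U := fun Xq => (master σ tw rd cd Xq).1
  have hτ : ∀ Xq : QuotCat (T ∩ U : Set B),
      ∃ τX : rd.σp.obj (cd.σm.obj Xq) ⟶ cd.σm.obj (rd.σp.obj Xq),
        τX ≫ cd.counit.app (rd.σp.obj Xq) = rd.σp.map (cd.counit.app Xq) := by
    intro Xq
    obtain ⟨τX, hτX⟩ := (cd.bij (rd.σp.obj (cd.σm.obj Xq)) (rd.σp.obj Xq) (mem1 Xq)).2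
      (rd.σp.map (cd.counit.app Xq))
    exact ⟨τX, hτX⟩
  choose τfun τspec using hτ
  have τuniq : ∀ (Xq : QuotCat (T ∩ U : Set B))
      (g : rd.σp.obj (cd.σm.obj Xq) ⟶ cd.σm.obj (rd.σp.obj Xq)),
      g ≫ cd.counit.app (rd.σp.obj Xq) = rd.σp.map (cd.counit.app Xq) → g = τfun Xq := by
    intro Xq g hgs
    apply (cd.bij (rd.σp.obj (cd.σm.obj Xq)) (rd.σp.obj Xq) (mem1 Xq)).1
    show g ≫ cd.counit.app _ = τfun Xq ≫ cd.counit.app _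
    rw [hgs, τspec]
  have natur : ∀ {Xq Yq : QuotCat (T ∩ U : Set B)} (f : Xq ⟶ Yq),
      (cd.σm ⋙ rd.σp).map f ≫ τfun Yq = τfun Xq ≫ (rd.σp ⋙ cd.σm).map f := by
    intro Xq Yq f
    apply (cd.bij (rd.σp.obj (cd.σm.obj Xq)) (rd.σp.obj Yq) (mem1 Xq)).1
    show ((cd.σm ⋙ rd.σp).map f ≫ τfun Yq) ≫ cd.counit.app _
        = (τfun Xq ≫ (rd.σp ⋙ cd.σm).map f) ≫ cd.counit.app _
    have L : ((cd.σm ⋙ rd.σp).map f ≫ τfun Yq) ≫ cd.counit.app (rd.σp.obj Yq)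
        = rd.σp.map (cd.counit.app Xq ≫ f) := by
      rw [Category.assoc, τspec Yq, Functor.comp_map, ← Functor.map_comp]
      congr 1
      have hnat := cd.counit.naturality f
      rw [Functor.id_map] at hnat
      exact hnat
    have R : (τfun Xq ≫ (rd.σp ⋙ cd.σm).map f) ≫ cd.counit.app (rd.σp.obj Yq)
        = rd.σp.map (cd.counit.app Xq ≫ f) := by
      have hnat := cd.counit.naturality (rd.σp.map f)
      rw [Functor.id_map] at hnat
      rw [Category.assoc, Functor.comp_map, hnat, ← Category.assoc, τspec Xq,
        ← Functor.map_comp]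
    rw [L, R]
  have compIso : ∀ Xq : QuotCat (T ∩ U : Set B), IsIso (τfun Xq) := by
    intro Xq
    obtain ⟨-, τ₀, ρ, hτ₀, h1, h2⟩ := master σ tw rd cd Xq
    have heq : τ₀ = τfun Xq := τuniq Xq τ₀ hτ₀
    rw [← heq]
    exact ⟨ρ, h1, h2⟩
  exact ⟨NatIso.ofComponents
    (fun Xq => @asIso _ _ _ _ _ (compIso Xq)) (fun f => natur f)⟩

end Twin

end Aux7

end Statement7Proof

/-- Proposition 2.33 / `8.6`. Let `((S,T),(U,V))` be a twin cotorsion pair,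
`σ⁺` a reflection functor onto `B̄⁺` (with unit `p : 𝟭 ⟶ σ⁺` inducing bijections
`B̄(σ⁺X, Y) ≅ B̄(X, Y)` for `Y ∈ B⁺`), and `σ⁻` a coreflection functor onto `B̄⁻` (with counit
`m : σ⁻ ⟶ 𝟭` inducing bijections `B̄(X, σ⁻Y) ≅ B̄(X, Y)` for `X ∈ B⁻`).  Then there is a
natural isomorphism `η : σ⁺ ∘ σ⁻ ≅ σ⁻ ∘ σ⁺` (of functors from `B̄` to the heart). -/
theorem statement_7 {B : Type u} [Category.{v} B] [Preadditive B] [HasFiniteBiproducts B]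
    (σ : ExtStruct B) {S T U V : Set B} (twin : σ.IsTwinCotorsionPair S T U V)
    (rd : ReflectorData (B := B) (T ∩ U) (σ.tPos T U V))
    (cd : CoreflectorData (B := B) (T ∩ U) (σ.tNeg S T U)) :
    Nonempty ((cd.σm ⋙ rd.σp) ≅ (rd.σp ⋙ cd.σm)) :=
  Aux7.main σ twin rd cd

end ExtriHearts
end

section
/- Let (U,V) be a cotorsion pair on an extriangulated category B with associated cohomological functor H: B → H̲. For any object B ∈ B, H(B) = 0 if and only if B ∈ add(U ∗ V), i.e. B is a direct summand of an object X admitting a conflation U' ↣ X ↠ V' with U' ∈ U, V' ∈ V. In particular, add(U ∗ V) is an extension-closed subcategory of B. -/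
namespace ExtriHearts

open CategoryTheory CategoryTheory.Limits Opposite

attribute [local instance] CategoryTheory.Limits.hasBinaryBiproducts_of_finite_biproducts

universe v u v₂ u₂

section Toolkit

open PreExtStruct

variable {B : Type u} [Category.{v} B] [Preadditive B] [HasFiniteBiproducts B] (σ : ExtStruct B)

namespace ExtStruct

section EAlg

variable {σ}

lemma pull_pull {C'' C' C A : B} (c' : C'' ⟶ C') (c : C' ⟶ C) (δ : σ.Ext C A) :
    σ.pull c' (σ.pull c δ) = σ.pull (c' ≫ c) δ := by
  simp only [PreExtStruct.pull, op_comp, σ.E.map_comp, NatTrans.comp_app]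
  rfl

lemma push_push {C A A' A'' : B} (a : A ⟶ A') (a' : A' ⟶ A'') (δ : σ.Ext C A) :
    σ.push a' (σ.push a δ) = σ.push (a ≫ a') δ := by
  change ((σ.E.obj (op C)).map a ≫ (σ.E.obj (op C)).map a') δ = _
  rw [← Functor.map_comp]
  rfl

lemma push_pull {C' C A A' : B} (c : C' ⟶ C) (a : A ⟶ A') (δ : σ.Ext C A) :
    σ.push a (σ.pull c δ) = σ.pull c (σ.push a δ) := by
  change ((σ.E.map c.op).app A ≫ (σ.E.obj (op C')).map a) δ =
    ((σ.E.obj (op C)).map a ≫ (σ.E.map c.op).app A') δ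
  rw [NatTrans.naturality]

@[simp] lemma push_id {C A : B} (δ : σ.Ext C A) : σ.push (𝟙 A) δ = δ := by
  simp only [PreExtStruct.push, (σ.E.obj (op C)).map_id]; rfl

@[simp] lemma pull_id {C A : B} (δ : σ.Ext C A) : σ.pull (𝟙 C) δ = δ := by
  simp only [PreExtStruct.pull, op_id, σ.E.map_id]; rfl

@[simp] lemma push_zero_ext {C A A' : B} (a : A ⟶ A') : σ.push a (0 : σ.Ext C A) = 0 :=
  map_zero _

@[simp] lemma pull_zero_ext {C' C A : B} (c : C' ⟶ C) : σ.pull c (0 : σ.Ext C A) = 0 :=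
  map_zero _

lemma push_zero_mor {C A A' : B} (δ : σ.Ext C A) : σ.push (0 : A ⟶ A') δ = 0 := by
  haveI := σ.additive_fst (op C)
  simp only [PreExtStruct.push, Functor.map_zero]; rfl

lemma pull_zero_mor {C' C A : B} (δ : σ.Ext C A) : σ.pull (0 : C' ⟶ C) δ = 0 := by
  haveI := σ.additive_snd A
  have h0 : ((0 : C' ⟶ C).op) = (0 : op C ⟶ op C') := rfl
  have h1 : (σ.E.map (0 : op C ⟶ op C')).app A = (σ.E.flip.obj A).map (0 : op C ⟶ op C') := rfl
  show (σ.E.map (0 : C' ⟶ C).op).app A δ = 0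
  rw [h0, h1, Functor.map_zero]
  rfl

end EAlg

end ExtStruct

end Toolkit
namespace ExtStruct

open ZeroObject

section ConflLemmas

variable {B : Type u} [Category.{v} B] [Preadditive B] [HasFiniteBiproducts B] {σ : ExtStruct B}
variable {A X C : B}

lemma realize_comp_zero_and_pull {δ : σ.Ext C A} {x : A ⟶ X} {y : X ⟶ C}
    (h : σ.realize δ x y) : x ≫ y = 0 ∧ σ.pull y δ = 0 := by
  obtain ⟨c, hc1, hc2⟩ := σ.et3 (0 : σ.Ext X A) δ biprod.inl biprod.snd x y
    (σ.realize_zero A X) h (𝟙 A) (biprod.desc x (𝟙 X)) (by simp)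
  have hcy : c = y := by
    have h1 := congrArg (fun f => biprod.inr ≫ f) hc2
    simpa using h1
  subst hcy
  constructor
  · have h2 := congrArg (fun f => biprod.inl ≫ f) hc2
    simpa using h2.symm
  · rw [← hc1]; simp

lemma realize_comp_zero {δ : σ.Ext C A} {x : A ⟶ X} {y : X ⟶ C} (h : σ.realize δ x y) :
    x ≫ y = 0 := (realize_comp_zero_and_pull h).1

lemma pull_deflation {δ : σ.Ext C A} {x : A ⟶ X} {y : X ⟶ C} (h : σ.realize δ x y) :
    σ.pull y δ = 0 := (realize_comp_zero_and_pull h).2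

lemma push_inflation {δ : σ.Ext C A} {x : A ⟶ X} {y : X ⟶ C} (h : σ.realize δ x y) :
    σ.push x δ = 0 := by
  obtain ⟨a, ha1, ha2⟩ := σ.et3op δ (0 : σ.Ext C X) x y biprod.inl biprod.snd h
    (σ.realize_zero X C) (biprod.lift (𝟙 X) y) (𝟙 C) (by simp)
  have hax : a = x := by
    have h1 := congrArg (fun f => f ≫ biprod.fst) ha2
    simpa using h1.symm
  rw [← hax, ha1]
  simp

lemma realize_of_eq {δ δ' : σ.Ext C A} {x x' : A ⟶ X} {y y' : X ⟶ C}
    (h : σ.realize δ x y) (h1 : δ = δ') (h2 : x = x') (h3 : y = y') : σ.realize δ' x' y' := by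
  subst h1; subst h2; subst h3; exact h

/-- L2 : lifting along a deflation. -/
lemma lift_of_pull_zero {δ : σ.Ext C A} {x : A ⟶ X} {y : X ⟶ C} (h : σ.realize δ x y)
    {T : B} (f : T ⟶ C) (hf : σ.pull f δ = 0) : ∃ g : T ⟶ X, g ≫ y = f := by
  obtain ⟨b, hb1, hb2⟩ := σ.realize_map (0 : σ.Ext T A) δ biprod.inl biprod.snd x y (𝟙 A) f
    (σ.realize_zero A T) h (by simp [hf])
  refine ⟨biprod.inr ≫ b, ?_⟩
  have := congrArg (fun g => biprod.inr ≫ g) hb2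
  simpa using this.symm

/-- L2' : extending along an inflation. -/
lemma extend_of_push_zero {δ : σ.Ext C A} {x : A ⟶ X} {y : X ⟶ C} (h : σ.realize δ x y)
    {T : B} (f : A ⟶ T) (hf : σ.push f δ = 0) : ∃ g : X ⟶ T, x ≫ g = f := by
  obtain ⟨b, hb1, hb2⟩ := σ.realize_map δ (0 : σ.Ext C T) x y biprod.inl biprod.snd f (𝟙 C)
    h (σ.realize_zero T C) (by simp [hf])
  refine ⟨b ≫ biprod.fst, ?_⟩
  rw [← Category.assoc, hb1]
  simp

/-- the zero object conflation `0 ↣ Y = Y`. -/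
lemma realize_zero_from_zero (Y : B) :
    σ.realize (0 : σ.Ext Y (0 : B)) (0 : (0 : B) ⟶ Y) (𝟙 Y) := by
  refine realize_of_eq (σ.realize_iso (0 : σ.Ext Y (0 : B)) biprod.inl biprod.snd
    (Iso.mk biprod.snd biprod.inr
      (by apply biprod.hom_ext
          · exact (isZero_zero B).eq_of_tgt _ _
          · simp)
      (by simp)) (σ.realize_zero _ _)) rfl ((isZero_zero B).eq_of_src _ _) (by simp)

/-- the zero object conflation `A = A ↠ 0`. -/
lemma realize_zero_to_zero (A : B) :
    σ.realize (0 : σ.Ext (0 : B) A) (𝟙 A) (0 : A ⟶ (0 : B)) := by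
  refine realize_of_eq (σ.realize_iso (0 : σ.Ext (0 : B) A) biprod.inl biprod.snd
    (Iso.mk biprod.fst biprod.inl
      (by apply biprod.hom_ext
          · simp
          · exact (isZero_zero B).eq_of_tgt _ _)
      (by simp)) (σ.realize_zero _ _)) rfl (by simp) ((isZero_zero B).eq_of_tgt _ _)

/-- L3 : descending a morphism killing the inflation. -/
lemma desc_of_comp_zero {δ : σ.Ext C A} {x : A ⟶ X} {y : X ⟶ C} (h : σ.realize δ x y)
    {T : B} (φ : X ⟶ T) (hφ : x ≫ φ = 0) : ∃ ψ : C ⟶ T, y ≫ ψ = φ := by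
  obtain ⟨c, _, hc2⟩ := σ.et3 δ (0 : σ.Ext T (0 : B)) x y (0 : (0 : B) ⟶ T) (𝟙 T)
    h (realize_zero_from_zero T) (0 : A ⟶ (0 : B)) φ (by simp [hφ])
  exact ⟨c, by simpa using hc2⟩

/-- L3' : lifting a morphism killed by the deflation. -/
lemma lift_of_comp_zero {δ : σ.Ext C A} {x : A ⟶ X} {y : X ⟶ C} (h : σ.realize δ x y)
    {T : B} (φ : T ⟶ X) (hφ : φ ≫ y = 0) : ∃ ψ : T ⟶ A, ψ ≫ x = φ := by
  obtain ⟨a, _, ha2⟩ := σ.et3op (0 : σ.Ext (0 : B) T) δ (𝟙 T) (0 : T ⟶ (0 : B)) x y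
    (realize_zero_to_zero T) h φ (0 : (0 : B) ⟶ C) (by simp [hφ])
  exact ⟨a, by simpa using ha2.symm⟩

/-- a conflation realizing `0` splits : retraction of the inflation. -/
lemma split_retraction {x : A ⟶ X} {y : X ⟶ C} (h : σ.realize (0 : σ.Ext C A) x y) :
    ∃ r : X ⟶ A, x ≫ r = 𝟙 A := by
  obtain ⟨b, hb1, _⟩ := σ.realize_unique (0 : σ.Ext C A) x y biprod.inl biprod.snd h
    (σ.realize_zero A C)
  exact ⟨b.hom ≫ biprod.fst, by rw [← Category.assoc, hb1]; simp⟩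

/-- a conflation realizing `0` splits : section of the deflation. -/
lemma split_section {x : A ⟶ X} {y : X ⟶ C} (h : σ.realize (0 : σ.Ext C A) x y) :
    ∃ s : C ⟶ X, s ≫ y = 𝟙 C := by
  obtain ⟨b, _, hb2⟩ := σ.realize_unique (0 : σ.Ext C A) x y biprod.inl biprod.snd h
    (σ.realize_zero A C)
  refine ⟨biprod.inr ≫ b.inv, ?_⟩
  have : b.inv ≫ y = biprod.snd := by rw [← hb2]; simp
  rw [Category.assoc, this]; simp

/-- L4. -/
lemma pull_exact {δ : σ.Ext C A} {x : A ⟶ X} {y : X ⟶ C} (h : σ.realize δ x y)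
    {T : B} (ε : σ.Ext X T) (hε : σ.pull x ε = 0) : ∃ ε' : σ.Ext C T, σ.pull y ε' = ε := by
  obtain ⟨M, m, e, hm⟩ := σ.realize_ex ε
  obtain ⟨E₀, e₁, d₁, m₁, δ'', _, _, _, hre, _, hlast⟩ := σ.et4op ε m e δ x y hm h
  rw [hε] at hre
  obtain ⟨r, hr⟩ := split_retraction hre
  refine ⟨σ.push r δ'', ?_⟩
  rw [← push_pull, hlast, push_push, hr, push_id]

/-- L4'. -/
lemma push_exact {δ : σ.Ext C A} {x : A ⟶ X} {y : X ⟶ C} (h : σ.realize δ x y)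
    {T : B} (ε : σ.Ext T X) (hε : σ.push y ε = 0) : ∃ ε' : σ.Ext T A, σ.push x ε' = ε := by
  obtain ⟨P, p, q, hp⟩ := σ.realize_ex ε
  obtain ⟨E₀, d, e, h', δ'', _, _, _, hre, _, hlast⟩ := σ.et4 δ x y ε p q h hp
  rw [hε] at hre
  obtain ⟨s, hs⟩ := split_section hre
  refine ⟨σ.pull s δ'', ?_⟩
  rw [push_pull, hlast, pull_pull, hs, pull_id]

/-- L5. -/
lemma eq_push_of_pull_zero {δ : σ.Ext C A} {x : A ⟶ X} {y : X ⟶ C} (h : σ.realize δ x y)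
    {T : B} (ρ : σ.Ext C T) (hρ : σ.pull y ρ = 0) : ∃ g : A ⟶ T, ρ = σ.push g δ := by
  obtain ⟨M, m, e, hm⟩ := σ.realize_ex ρ
  obtain ⟨hh, hhy⟩ := lift_of_pull_zero hm y hρ
  obtain ⟨a, ha1, _⟩ := σ.et3op δ ρ x y m e h hm hh (𝟙 C) (by rw [Category.comp_id, hhy])
  exact ⟨a, by rw [ha1, pull_id]⟩

/-- L5'. -/
lemma eq_pull_of_push_zero {δ : σ.Ext C A} {x : A ⟶ X} {y : X ⟶ C} (h : σ.realize δ x y)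
    {T : B} (ρ : σ.Ext T A) (hρ : σ.push x ρ = 0) : ∃ g : T ⟶ C, ρ = σ.pull g δ := by
  obtain ⟨M, m, e, hm⟩ := σ.realize_ex ρ
  obtain ⟨hh, hhx⟩ := extend_of_push_zero hm x hρ
  obtain ⟨c, hc1, _⟩ := σ.et3 ρ δ m e x y hm h (𝟙 A) hh (by rw [hhx]; simp)
  exact ⟨c, by rw [← hc1, push_id]⟩

/-- an endomorphism of a conflation which is the identity on the ends is invertible. -/
lemma endo_isIso {δ : σ.Ext C A} {x : A ⟶ X} {y : X ⟶ C} (h : σ.realize δ x y)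
    (b : X ⟶ X) (hx : x ≫ b = x) (hy : b ≫ y = y) : IsIso b := by
  have h1 : x ≫ (𝟙 X - b) = 0 := by simp [Preadditive.comp_sub, hx]
  obtain ⟨ψ, hψ⟩ := desc_of_comp_zero h (𝟙 X - b) h1
  have hny : (y ≫ ψ) ≫ y = 0 := by
    rw [hψ]; simp [Preadditive.sub_comp, hy]
  have hnn : (y ≫ ψ) ≫ (y ≫ ψ) = 0 := by
    rw [← Category.assoc, hny, zero_comp]
  have hb : b = 𝟙 X - y ≫ ψ := by rw [hψ]; abel
  refine ⟨𝟙 X + y ≫ ψ, ?_, ?_⟩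
  · rw [hb]
    simp only [Preadditive.sub_comp, Preadditive.comp_add, Preadditive.add_comp,
      Preadditive.comp_sub, Category.id_comp, Category.comp_id, hnn]
    abel
  · rw [hb]
    simp only [Preadditive.sub_comp, Preadditive.comp_add, Preadditive.add_comp,
      Preadditive.comp_sub, Category.id_comp, Category.comp_id, hnn]
    abel

/-- transporting a realization along an isomorphism on the first term. -/
lemma realize_push_iso {δ : σ.Ext C A} {x : A ⟶ X} {y : X ⟶ C} (h : σ.realize δ x y)
    {A₂ : B} (ι : A ≅ A₂) : σ.realize (σ.push ι.hom δ) (ι.inv ≫ x) y := by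
  obtain ⟨X₂, x₂, y₂, h₂⟩ := σ.realize_ex (σ.push ι.hom δ)
  obtain ⟨b, hb1, hb2⟩ := σ.realize_map δ (σ.push ι.hom δ) x y x₂ y₂ ι.hom (𝟙 C) h h₂
    (by simp)
  obtain ⟨b', hb1', hb2'⟩ := σ.realize_map (σ.push ι.hom δ) δ x₂ y₂ x y ι.inv (𝟙 C) h₂ h
    (by rw [push_push, ι.hom_inv_id, push_id]; simp)
  rw [Category.comp_id] at hb2 hb2'
  have hbb : IsIso (b ≫ b') := by
    refine endo_isIso h (b ≫ b') ?_ ?_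
    · rw [← Category.assoc, hb1, Category.assoc, hb1', ← Category.assoc, ι.hom_inv_id,
        Category.id_comp]
    · rw [Category.assoc, ← hb2', ← hb2]
  have hb'b : IsIso (b' ≫ b) := by
    refine endo_isIso h₂ (b' ≫ b) ?_ ?_
    · rw [← Category.assoc, hb1', Category.assoc, hb1, ← Category.assoc, ι.inv_hom_id,
        Category.id_comp]
    · rw [Category.assoc, ← hb2, ← hb2']
  have e1 : b' ≫ (b ≫ inv (b' ≫ b)) = 𝟙 X₂ := by
    rw [← Category.assoc]; exact IsIso.hom_inv_id (b' ≫ b)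
  have e2 : (inv (b ≫ b') ≫ b) ≫ b' = 𝟙 X := by
    rw [Category.assoc]; exact IsIso.inv_hom_id (b ≫ b')
  have hlr : inv (b ≫ b') ≫ b = b ≫ inv (b' ≫ b) := by
    calc inv (b ≫ b') ≫ b
        = (inv (b ≫ b') ≫ b) ≫ (b' ≫ (b ≫ inv (b' ≫ b))) := by rw [e1, Category.comp_id]
      _ = (inv (b ≫ b') ≫ (b ≫ b')) ≫ (b ≫ inv (b' ≫ b)) := by simp only [Category.assoc]
      _ = b ≫ inv (b' ≫ b) := by rw [IsIso.inv_hom_id, Category.id_comp]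
  have : IsIso b' := ⟨b ≫ inv (b' ≫ b), e1, by rw [← hlr]; exact e2⟩
  have := σ.realize_iso (σ.push ι.hom δ) x₂ y₂ (asIso b') h₂
  rw [show x₂ ≫ (asIso b').hom = ι.inv ≫ x from hb1'] at this
  rwa [show (asIso b').inv ≫ y₂ = y by rw [hb2', ← Category.assoc, asIso_inv,
    IsIso.inv_hom_id, Category.id_comp]] at this

end ConflLemmas

end ExtStruct
namespace ExtStruct

section Cotorsion

variable {B : Type u} [Category.{v} B] [Preadditive B] [HasFiniteBiproducts B] {σ : ExtStruct B}
variable {U V : Set B}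

lemma memU_of_vanish (cp : σ.IsCotorsionPair U V) {X : B} (hX : ∀ V₀ ∈ V, ∀ δ : σ.Ext X V₀, δ = 0) : X ∈ U := by
  obtain ⟨V₀, U₀, f, g, hV₀, hU₀, δr, hr⟩ := cp.resolve X
  rw [hX V₀ hV₀ δr] at hr
  obtain ⟨s, hs⟩ := split_section hr
  exact cp.addU.summand_mem X U₀ hU₀ s g hs

lemma memV_of_vanish (cp : σ.IsCotorsionPair U V) {X : B} (hX : ∀ U₀ ∈ U, ∀ δ : σ.Ext U₀ X, δ = 0) : X ∈ V := by
  obtain ⟨V₀, U₀, f, g, hV₀, hU₀, δr, hr⟩ := cp.coresolve X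
  rw [hX U₀ hU₀ δr] at hr
  obtain ⟨r, hrr⟩ := split_retraction hr
  exact cp.addV.summand_mem X V₀ hV₀ f r hrr

lemma memU_ext_closed (cp : σ.IsCotorsionPair U V) {A X C : B} {δ : σ.Ext C A} {x : A ⟶ X} {y : X ⟶ C}
    (h : σ.realize δ x y) (hA : A ∈ U) (hC : C ∈ U) : X ∈ U := by
  refine memU_of_vanish cp (fun V₀ hV₀ ε => ?_)
  obtain ⟨ε', hε'⟩ := pull_exact h ε (cp.ext_vanish hA hV₀ _)
  rw [← hε', cp.ext_vanish hC hV₀ ε', pull_zero_ext]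

lemma memV_ext_closed (cp : σ.IsCotorsionPair U V) {A X C : B} {δ : σ.Ext C A} {x : A ⟶ X} {y : X ⟶ C}
    (h : σ.realize δ x y) (hA : A ∈ V) (hC : C ∈ V) : X ∈ V := by
  refine memV_of_vanish cp (fun U₀ hU₀ ε => ?_)
  obtain ⟨ε', hε'⟩ := push_exact h ε (cp.ext_vanish hU₀ hC _)
  rw [← hε', cp.ext_vanish hU₀ hA ε', push_zero_ext]

lemma W_addClosed (cp : σ.IsCotorsionPair U V) : AddClosed (U ∩ V : Set B) where
  zero_mem Z h := ⟨cp.addU.zero_mem Z h, cp.addV.zero_mem Z h⟩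
  biprod_mem X Y hX hY := ⟨cp.addU.biprod_mem X Y hX.1 hY.1, cp.addV.biprod_mem X Y hX.2 hY.2⟩
  summand_mem X Y hY s r hsr :=
    ⟨cp.addU.summand_mem X Y hY.1 s r hsr, cp.addV.summand_mem X Y hY.2 s r hsr⟩

lemma V_subset_sPos (cp : σ.IsCotorsionPair U V) {X : B} (hX : X ∈ V) : X ∈ σ.sPos U V := by
  obtain ⟨V₀, U₀, f, g, hV₀, hU₀, δr, hr⟩ := cp.resolve X
  exact ⟨V₀, U₀, f, g, hV₀, ⟨hU₀, memV_ext_closed cp hr hV₀ hX⟩, δr, hr⟩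

end Cotorsion

end ExtStruct
section QuotLemmas

variable {B : Type u} [Category.{v} B] [Preadditive B] [HasFiniteBiproducts B]
variable {W' : Set B}

open ZeroObject

lemma mem_wIdeal_of_factor {X Y : B} {f : X ⟶ Y} {Z : B} (hZ : Z ∈ W') (p : X ⟶ Z)
    (q : Z ⟶ Y) (hf : f = p ≫ q) : f ∈ wIdeal W' X Y :=
  AddSubgroup.subset_closure ⟨Z, hZ, p, q, hf⟩

lemma wIdeal_iff_factor (hW : AddClosed W') {X Y : B} (f : X ⟶ Y) :
    f ∈ wIdeal W' X Y ↔ ∃ Z ∈ W', ∃ p : X ⟶ Z, ∃ q : Z ⟶ Y, f = p ≫ q := by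
  constructor
  · intro hf
    let S : AddSubgroup (X ⟶ Y) :=
      { carrier := {f : X ⟶ Y | ∃ Z ∈ W', ∃ p : X ⟶ Z, ∃ q : Z ⟶ Y, f = p ≫ q}
        zero_mem' := ⟨(0 : B), hW.zero_mem _ (isZero_zero B), 0, 0, by simp⟩
        add_mem' := by
          rintro a b ⟨Z₁, hZ₁, p₁, q₁, rfl⟩ ⟨Z₂, hZ₂, p₂, q₂, rfl⟩
          exact ⟨Z₁ ⊞ Z₂, hW.biprod_mem _ _ hZ₁ hZ₂, biprod.lift p₁ p₂, biprod.desc q₁ q₂,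
            by simp⟩
        neg_mem' := by
          rintro a ⟨Z₁, hZ₁, p₁, q₁, rfl⟩
          exact ⟨Z₁, hZ₁, -p₁, q₁, by simp⟩ }
    have hle : wIdeal W' X Y ≤ S := by
      rw [wIdeal, AddSubgroup.closure_le]
      intro g hg
      exact hg
    exact hle hf
  · rintro ⟨Z, hZ, p, q, rfl⟩
    exact mem_wIdeal_of_factor hZ p q rfl

lemma quot_map_eq_zero_iff {X Y : B} (f : X ⟶ Y) :
    (toQuot W').map f = 0 ↔ f ∈ wIdeal W' X Y := by
  have h0 : (0 : (toQuot W').obj X ⟶ (toQuot W').obj Y) = (toQuot W').map 0 := rfl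
  rw [h0, Quotient.functor_map_eq_iff]
  show f - 0 ∈ wIdeal W' X Y ↔ f ∈ wIdeal W' X Y
  rw [sub_zero]

lemma quot_hom_surj {X Y : B} (G : (toQuot W').obj X ⟶ (toQuot W').obj Y) :
    ∃ g : X ⟶ Y, (toQuot W').map g = G :=
  (toQuot W').map_surjective G

lemma quot_obj_eq (N : QuotCat W') : (toQuot W').obj N.as = N := rfl

lemma memW_of_id_wIdeal (hW : AddClosed W') {Z : B} (h : 𝟙 Z ∈ wIdeal W' Z Z) : Z ∈ W' := by
  obtain ⟨W₀, hW₀, p, q, hpq⟩ := (wIdeal_iff_factor hW _).1 h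
  exact hW.summand_mem Z W₀ hW₀ p q hpq.symm

end QuotLemmas
section Refl

open ZeroObject ExtStruct

variable {B : Type u} [Category.{v} B] [Preadditive B] [HasFiniteBiproducts B]

/-- Auxiliary: a reflection sequence for `X` w.r.t. a cotorsion pair. -/
structure ReflSeq (σ : ExtStruct B) (U V : Set B) (X : B) where
  Z : B
  U'' : B
  z : X ⟶ Z
  w : Z ⟶ U''
  δz : σ.Ext U'' X
  hreal : σ.realize δz z w
  hU'' : U'' ∈ U
  hZpos : Z ∈ σ.sPos U V
  surj : ∀ ⦃V₀ : B⦄, V₀ ∈ V → ∀ ρ : σ.Ext X V₀, ∃ μ : σ.Ext Z V₀, σ.pull z μ = ρ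

/-- Auxiliary: a coreflection sequence for `Z` w.r.t. a cotorsion pair. -/
structure CoreflSeq (σ : ExtStruct B) (U V : Set B) (Z : B) where
  Z' : B
  V₂ : B
  v : V₂ ⟶ Z'
  d : Z' ⟶ Z
  δd : σ.Ext Z V₂
  hreal : σ.realize δd v d
  hV₂ : V₂ ∈ V
  hneg : Z' ∈ σ.sNeg U V
  surj : ∀ ⦃U₀ : B⦄, U₀ ∈ U → ∀ τ : σ.Ext U₀ Z, ∃ μ : σ.Ext U₀ Z', σ.push d μ = τ

variable {σ : ExtStruct B} {U V : Set B}

lemma exists_reflSeq (cp : σ.IsCotorsionPair U V) (X : B) : Nonempty (ReflSeq σ U V X) := by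
  obtain ⟨Vx, Ux, s, t, hVx, hUx, δr, hr⟩ := cp.resolve X
  obtain ⟨Wv, U'', i, p, hWv, hU'', κ, hκ⟩ := cp.coresolve Ux
  have hWvU : Wv ∈ U := memU_ext_closed cp hκ hUx hU''
  obtain ⟨Z, z, e, h', δ'', _, _, h1, h2, h3, _⟩ := σ.et4 δr s t κ i p hr hκ
  refine ⟨⟨Z, U'', z, e, σ.push t κ, h2, hU'',
    ⟨Vx, Wv, s ≫ i, h', hVx, ⟨hWvU, hWv⟩, δ'', h1⟩, ?_⟩⟩
  intro V₀ hV₀ ρ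
  obtain ⟨g, hg⟩ := eq_push_of_pull_zero hr ρ (cp.ext_vanish hUx hV₀ _)
  exact ⟨σ.push g δ'', by rw [← push_pull, h3, ← hg]⟩

lemma exists_coreflSeq (cp : σ.IsCotorsionPair U V) (Z : B) : Nonempty (CoreflSeq σ U V Z) := by
  obtain ⟨Vz, Uz, c, c', hVz, hUz, lam, hlam⟩ := cp.coresolve Z
  obtain ⟨V₂, U₂, s₂, t₂, hV₂, hU₂, κ₂, hκ₂⟩ := cp.resolve Vz
  have hU₂V : U₂ ∈ V := memV_ext_closed cp hκ₂ hV₂ hVz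
  obtain ⟨Z', e', d', m, δ''₂, _, _, h1, h2, h3, _⟩ := σ.et4op κ₂ s₂ t₂ lam c c' hκ₂ hlam
  refine ⟨⟨Z', V₂, e', d', σ.pull c κ₂, h2, hV₂,
    ⟨U₂, Uz, m, t₂ ≫ c', ⟨hU₂, hU₂V⟩, hUz, δ''₂, h1⟩, ?_⟩⟩
  intro U₀ hU₀ τ
  obtain ⟨g, hg⟩ := eq_pull_of_push_zero hlam τ (cp.ext_vanish hU₀ hVz _)
  exact ⟨σ.pull g δ''₂, by rw [push_pull, h3, ← hg]⟩

lemma reflSeq_of_star (cp : σ.IsCotorsionPair U V) {X : B} (hX : X ∈ σ.star U V) :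
    ∃ R : ReflSeq σ U V X, R.Z ∈ V := by
  obtain ⟨U₀, V₀, u, v, hU₀, hV₀, δ₀, h₀⟩ := hX
  obtain ⟨Vx, Ux', cX, cX', hVx, hUx', δc, hc⟩ := cp.coresolve X
  refine ⟨⟨Vx, Ux', cX, cX', δc, hc, hUx', V_subset_sPos cp hVx, ?_⟩, hVx⟩
  intro V₁ hV₁ ρ
  obtain ⟨ρ', hρ'⟩ := pull_exact h₀ ρ (cp.ext_vanish hU₀ hV₁ _)
  obtain ⟨vt, hvt⟩ := extend_of_push_zero hc v (cp.ext_vanish hUx' hV₀ _)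
  exact ⟨σ.pull vt ρ', by rw [pull_pull, hvt, hρ']⟩

/-- surjectivity half of the reflection property, at the level of `B`. -/
lemma ReflSeq.lift (cp : σ.IsCotorsionPair U V) {X : B} (R : ReflSeq σ U V X) {Y : B}
    (hY : Y ∈ σ.sPos U V) (f : X ⟶ Y) : ∃ g : R.Z ⟶ Y, R.z ≫ g = f := by
  obtain ⟨V₀, W₀, a, b, hV₀, hW₀, θ, hθ⟩ := hY
  obtain ⟨μ, hμ⟩ := R.surj hV₀ (σ.pull f θ)
  obtain ⟨Mμ, mμ, eμ, hMμ⟩ := σ.realize_ex μ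
  obtain ⟨E₀, e', d, m', δ'', _, _, _, hre, hpd, _⟩ := σ.et4op μ mμ eμ R.δz R.z R.w hMμ R.hreal
  rw [hμ] at hre
  obtain ⟨b₁, hb₁, hb₂⟩ := σ.realize_map (σ.pull f θ) θ e' d a b (𝟙 V₀) f hre hθ (by simp)
  have hpush : σ.push f R.δz = 0 := by
    rw [← hpd, push_push, hb₂, ← push_push, cp.ext_vanish R.hU'' hW₀.2 (σ.push b₁ δ''),
      push_zero_ext]
  exact extend_of_push_zero R.hreal f hpush

/-- injectivity half of the reflection property, at the level of ideals. -/
lemma ReflSeq.desc_mem (cp : σ.IsCotorsionPair U V) {X : B} (R : ReflSeq σ U V X) {Y : B}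
    (hY : Y ∈ σ.sPos U V) (g : R.Z ⟶ Y) (hg : R.z ≫ g ∈ wIdeal (U ∩ V : Set B) X Y) :
    g ∈ wIdeal (U ∩ V : Set B) R.Z Y := by
  obtain ⟨V₀, W₀, aθ, bθ, hV₀, hW₀, θ, hθ⟩ := hY
  obtain ⟨W₁, hW₁, p, q, hpq⟩ := (wIdeal_iff_factor (W_addClosed cp) _).1 hg
  obtain ⟨p', hp'⟩ := extend_of_push_zero R.hreal p (cp.ext_vanish R.hU'' hW₁.2 _)
  have hzero : R.z ≫ (g - p' ≫ q) = 0 := by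
    rw [Preadditive.comp_sub, ← Category.assoc, hp', ← hpq, sub_self]
  obtain ⟨ψ, hψ⟩ := desc_of_comp_zero R.hreal _ hzero
  obtain ⟨ψ', hψ'⟩ := lift_of_pull_zero hθ ψ (cp.ext_vanish R.hU'' hV₀ _)
  have hgeq : g = p' ≫ q + (R.w ≫ ψ') ≫ bθ := by
    rw [Category.assoc, hψ', hψ]; abel
  rw [hgeq]
  exact add_mem (mem_wIdeal_of_factor hW₁ p' q rfl)
    (mem_wIdeal_of_factor hW₀ (R.w ≫ ψ') bθ rfl)

/-- injectivity half of the coreflection property, at the level of ideals. -/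
lemma CoreflSeq.inj_mem (cp : σ.IsCotorsionPair U V) {Z : B} (R' : CoreflSeq σ U V Z) {N : B}
    (hN : N ∈ σ.sNeg U V) (g : N ⟶ R'.Z') (hg : g ≫ R'.d ∈ wIdeal (U ∩ V : Set B) N Z) :
    g ∈ wIdeal (U ∩ V : Set B) N R'.Z' := by
  obtain ⟨W₂, U₂N, n, m₂, hW₂, hU₂N, δN, hδN⟩ := hN
  obtain ⟨W₁, hW₁, p, q, hpq⟩ := (wIdeal_iff_factor (W_addClosed cp) _).1 hg
  obtain ⟨q', hq'⟩ := lift_of_pull_zero R'.hreal q (cp.ext_vanish hW₁.1 R'.hV₂ _)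
  have hzero : (g - p ≫ q') ≫ R'.d = 0 := by
    rw [Preadditive.sub_comp, Category.assoc, hq', ← hpq, sub_self]
  obtain ⟨ψ, hψ⟩ := lift_of_comp_zero R'.hreal _ hzero
  obtain ⟨χ, hχ⟩ := extend_of_push_zero hδN ψ (cp.ext_vanish hU₂N R'.hV₂ _)
  have hgeq : g = p ≫ q' + n ≫ (χ ≫ R'.v) := by
    rw [← Category.assoc, hχ, hψ]; abel
  rw [hgeq]
  exact add_mem (mem_wIdeal_of_factor hW₁ p q' rfl)
    (mem_wIdeal_of_factor hW₂ n (χ ≫ R'.v) rfl)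

lemma hom_vanish_into_V (cp : σ.IsCotorsionPair U V) {Z : B} (hZ : Z ∈ V) {N : B}
    (hN : N ∈ σ.sNeg U V) (f : N ⟶ Z) : f ∈ wIdeal (U ∩ V : Set B) N Z := by
  obtain ⟨W₂, U₂N, n, m₂, hW₂, hU₂N, δN, hδN⟩ := hN
  obtain ⟨g, hgn⟩ := extend_of_push_zero hδN f (cp.ext_vanish hU₂N hZ _)
  exact mem_wIdeal_of_factor hW₂ n g hgn.symm

end Refl
section PBQ

open ZeroObject ExtStruct

variable {B : Type u} [Category.{v} B] [Preadditive B] [HasFiniteBiproducts B]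
variable {σ : ExtStruct B}

lemma realize_twisted_split {C₁ C₂ : B} (c : C₁ ⟶ C₂) :
    ∃ v₀ : C₁ ⊞ C₂ ⟶ C₂, σ.realize (0 : σ.Ext C₂ C₁) (biprod.lift (𝟙 C₁) c) v₀ := by
  have hpf1 : biprod.desc (biprod.lift (𝟙 C₁) c) biprod.inr ≫
      biprod.desc (biprod.lift (𝟙 C₁) (-c)) biprod.inr = 𝟙 (C₁ ⊞ C₂) := by
    apply biprod.hom_ext' <;> apply biprod.hom_ext <;>
      simp [biprod.lift_desc, Preadditive.add_comp]
  have hpf2 : biprod.desc (biprod.lift (𝟙 C₁) (-c)) biprod.inr ≫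
      biprod.desc (biprod.lift (𝟙 C₁) c) biprod.inr = 𝟙 (C₁ ⊞ C₂) := by
    apply biprod.hom_ext' <;> apply biprod.hom_ext <;>
      simp [biprod.lift_desc, Preadditive.add_comp]
  exact ⟨biprod.desc (biprod.lift (𝟙 C₁) (-c)) biprod.inr ≫ biprod.snd,
    realize_of_eq (σ.realize_iso (0 : σ.Ext C₂ C₁) biprod.inl biprod.snd
      (Iso.mk (biprod.desc (biprod.lift (𝟙 C₁) c) biprod.inr)
        (biprod.desc (biprod.lift (𝟙 C₁) (-c)) biprod.inr) hpf1 hpf2)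
      (σ.realize_zero C₁ C₂)) rfl (by simp) rfl⟩

/-- The pullback conflation: given a conflation `A ↣ X₂ ↠ C₂`, a map `c : C₁ ⟶ C₂` and a
realization `A ↣ X₁ ↠ C₁` of the pulled-back extension, there is a conflation
`X₁ ↣ C₁ ⊞ X₂ ↠ C₂`. -/
lemma conflation_pullback {A X₂ C₂ : B} {δ₂ : σ.Ext C₂ A} {x₂ : A ⟶ X₂} {y₂ : X₂ ⟶ C₂}
    (h₂ : σ.realize δ₂ x₂ y₂) {C₁ : B} (c : C₁ ⟶ C₂) {X₁ : B} {x₁ : A ⟶ X₁} {y₁ : X₁ ⟶ C₁}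
    (h₁ : σ.realize (σ.pull c δ₂) x₁ y₁) :
    ∃ (l : X₁ ⟶ C₁ ⊞ X₂) (D : C₁ ⊞ X₂ ⟶ C₂), σ.Conflation l D := by
  -- the direct sum conflation `(0 ↣ C₁ = C₁) ⊞ (A ↣ X₂ ↠ C₂)`, with middle `C₁ ⊞ X₂`
  have hsum0 := σ.realize_sum (0 : σ.Ext C₁ (0 : B)) δ₂ biprod.inl biprod.snd x₂ y₂
    (σ.realize_zero (0 : B) C₁) h₂
  have hsum := σ.realize_iso _ _ _
    (biprod.mapIso (Iso.mk biprod.snd biprod.inr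
      (by apply biprod.hom_ext
          · exact (isZero_zero B).eq_of_tgt _ _
          · simp)
      (by simp) : ((0 : B) ⊞ C₁) ≅ C₁) (Iso.refl X₂)) hsum0
  obtain ⟨v₀, hsplit⟩ := realize_twisted_split (σ := σ) c
  obtain ⟨E₀, e, d, m, δ'', _, _, hconf, hre, _, _⟩ :=
    σ.et4op _ _ _ (0 : σ.Ext C₂ C₁) (biprod.lift (𝟙 C₁) c) v₀ hsum hsplit
  have hcomp : σ.pull (biprod.lift (𝟙 C₁) c) (σ.toPreExtStruct.sumExt (0 : σ.Ext C₁ (0 : B)) δ₂) =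
      σ.push (biprod.inr : A ⟶ (0 : B) ⊞ A) (σ.pull c δ₂) := by
    rw [PreExtStruct.sumExt, pull_zero_ext, push_zero_ext, zero_add, ← push_pull,
      pull_pull, biprod.lift_snd]
  rw [hcomp] at hre
  have htrans := realize_push_iso h₁ (Iso.mk biprod.inr biprod.snd (by simp)
    (by apply biprod.hom_ext
        · exact (isZero_zero B).eq_of_tgt _ _
        · simp) : A ≅ ((0 : B) ⊞ A))
  obtain ⟨β, hβ1, hβ2⟩ := σ.realize_unique (σ.push (biprod.inr : A ⟶ (0 : B) ⊞ A)
    (σ.pull c δ₂)) e d (biprod.snd ≫ x₁) y₁ hre htrans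
  exact ⟨β.inv ≫ m, _, σ.push β.hom δ'', realize_push_iso hconf β⟩

/-- the "CRUX" lemma: if `X` admits a reflection sequence with `Z ∈ V`, then
`X ∈ add (U ∗ V)`. -/
lemma mem_addStar_of_reflSeq_V {U V : Set B} (cp : σ.IsCotorsionPair U V) {X : B}
    (R : ReflSeq σ U V X) (hZV : R.Z ∈ V) : X ∈ σ.addStar U V := by
  obtain ⟨Vx, Ux, s, t, hVx, hUx, δr, hr⟩ := cp.resolve X
  obtain ⟨μ, hμ⟩ := R.surj hVx δr
  obtain ⟨M, mμ, eμ, hM⟩ := σ.realize_ex μ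
  have hMV : M ∈ V := memV_ext_closed cp hM hVx hZV
  have h₁ : σ.realize (σ.pull R.z μ) s t := by rw [hμ]; exact hr
  obtain ⟨l, D, hγ⟩ := conflation_pullback hM R.z h₁
  exact ⟨X ⊞ M, ⟨Ux, R.Z, l, D, hUx, hZV, hγ⟩, biprod.inl, biprod.fst, by simp⟩

end PBQ
section StarExt

open ZeroObject ExtStruct

variable {B : Type u} [Category.{v} B] [Preadditive B] [HasFiniteBiproducts B]
variable {σ : ExtStruct B} {U V : Set B}

/-- `U ∗ V` is closed under extensions. -/
lemma star_ext_closed (cp : σ.IsCotorsionPair U V) {A X C : B} {δ : σ.Ext C A}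
    {xa : A ⟶ X} {yb : X ⟶ C} (h : σ.realize δ xa yb)
    (hA : A ∈ σ.star U V) (hC : C ∈ σ.star U V) : X ∈ σ.star U V := by
  obtain ⟨U₀, V₀, u₀, v₀, hU₀, hV₀, δA, hδA⟩ := hA
  obtain ⟨U₁, V₁, u₁, v₁, hU₁, hV₁, δC, hδC⟩ := hC
  -- pull back `X ↠ C` along `U₁ ↣ C`
  obtain ⟨X', e, dX', m, δ'', _, hem, hconfX, hreX, _, _⟩ := σ.et4op δ xa yb δC u₁ v₁ h hδC
  -- build `Y ↣ X'` with `Y ∈ U`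
  obtain ⟨E₁, d₁, e₁, h₁, δ₁'', _, _, hconfE, hreE, _, _⟩ :=
    σ.et4 δA u₀ v₀ (σ.pull u₁ δ) e dX' hδA hreX
  have hz : σ.push v₀ (σ.pull u₁ δ) = 0 := by
    rw [push_pull]; exact cp.ext_vanish hU₁ hV₀ _
  rw [hz] at hreE
  obtain ⟨β₁, hb1, hb2⟩ := σ.realize_unique (0 : σ.Ext U₁ V₀) d₁ e₁ biprod.inl biprod.snd
    hreE (σ.realize_zero V₀ U₁)
  have hrev : σ.realize (0 : σ.Ext V₀ U₁)
      (biprod.inl ≫ ((biprod.braiding U₁ V₀).trans β₁.symm).hom)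
      (((biprod.braiding U₁ V₀).trans β₁.symm).inv ≫ biprod.snd) :=
    σ.realize_iso 0 biprod.inl biprod.snd _ (σ.realize_zero U₁ V₀)
  obtain ⟨Y, eY, dY, mY, δY'', _, _, hconfY, hreY, _, _⟩ :=
    σ.et4op δ₁'' (u₀ ≫ e) h₁ (0 : σ.Ext V₀ U₁) _ _ hconfE hrev
  have hYU : Y ∈ U := memU_ext_closed cp hreY hU₀ hU₁
  -- glue: `Y ↣ X ↠ (extension of V₁ by V₀)`
  obtain ⟨E₃, d₃, e₃, h₃, δ₃'', _, _, hconf₃, hre₃, _, _⟩ :=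
    σ.et4 δY'' mY _ δ'' m (yb ≫ v₁) hconfY hconfX
  have hE₃V : E₃ ∈ V := memV_ext_closed cp hre₃ hV₀ hV₁
  exact ⟨Y, E₃, mY ≫ m, h₃, hYU, hE₃V, δ₃'', hconf₃⟩

/-- `add (U ∗ V)` is closed under extensions. -/
lemma addStar_ext_closed (cp : σ.IsCotorsionPair U V) {A X C : B} (f : A ⟶ X) (g : X ⟶ C)
    (hconf : σ.Conflation f g) (hA : A ∈ σ.addStar U V) (hC : C ∈ σ.addStar U V) :
    X ∈ σ.addStar U V := by
  obtain ⟨δ, h⟩ := hconf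
  obtain ⟨A₁, hA₁, sA, rA, hsrA⟩ := hA
  obtain ⟨C₁, hC₁, sC, rC, hsrC⟩ := hC
  obtain ⟨X₂, x₂, y₂, h₂⟩ := σ.realize_ex (σ.pull rC δ)
  obtain ⟨X₃, x₃, y₃, h₃⟩ := σ.realize_ex (σ.push sA (σ.pull rC δ))
  obtain ⟨b₂, hb₂1, hb₂2⟩ := σ.realize_map (σ.pull rC δ) δ x₂ y₂ f g (𝟙 A) rC h₂ h (by simp)
  obtain ⟨b₃, hb₃1, hb₃2⟩ := σ.realize_map δ (σ.pull rC δ) f g x₂ y₂ (𝟙 A) sC h h₂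
    (by rw [push_id, pull_pull, hsrC, pull_id])
  obtain ⟨b₄, hb₄1, hb₄2⟩ := σ.realize_map (σ.pull rC δ) (σ.push sA (σ.pull rC δ)) x₂ y₂
    x₃ y₃ sA (𝟙 C₁) h₂ h₃ (by simp)
  obtain ⟨b₅, hb₅1, hb₅2⟩ := σ.realize_map (σ.push sA (σ.pull rC δ)) (σ.pull rC δ) x₃ y₃
    x₂ y₂ rA (𝟙 C₁) h₃ h₂ (by rw [push_push, hsrA, push_id]; simp)
  rw [Category.comp_id] at hb₄2 hb₅2
  rw [Category.id_comp] at hb₂1 hb₃1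
  have hiso1 : IsIso (b₃ ≫ b₂) := by
    refine endo_isIso h _ ?_ ?_
    · rw [← Category.assoc, hb₃1, hb₂1]
    · rw [Category.assoc, ← hb₂2, ← Category.assoc, ← hb₃2, Category.assoc, hsrC,
        Category.comp_id]
  have hiso2 : IsIso (b₄ ≫ b₅) := by
    refine endo_isIso h₂ _ ?_ ?_
    · rw [← Category.assoc, hb₄1, Category.assoc, hb₅1, ← Category.assoc, hsrA,
        Category.id_comp]
    · rw [Category.assoc, ← hb₅2, ← hb₄2]
  have hX₃ : X₃ ∈ σ.star U V := by
    obtain ⟨A₂, V₂, uA, vA, hA₂, hV₂, δA₂, hδA₂⟩ := hA₁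
    obtain ⟨A₃, V₃, uC, vC, hA₃, hV₃, δC₂, hδC₂⟩ := hC₁
    exact star_ext_closed cp h₃ ⟨A₂, V₂, uA, vA, hA₂, hV₂, δA₂, hδA₂⟩
      ⟨A₃, V₃, uC, vC, hA₃, hV₃, δC₂, hδC₂⟩
  refine ⟨X₃, hX₃, b₃ ≫ b₄, (b₅ ≫ inv (b₄ ≫ b₅)) ≫ (b₂ ≫ inv (b₃ ≫ b₂)), ?_⟩
  have e1 : b₄ ≫ b₅ ≫ inv (b₄ ≫ b₅) = 𝟙 X₂ := by
    rw [← Category.assoc]; exact IsIso.hom_inv_id _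
  have e2 : b₃ ≫ b₂ ≫ inv (b₃ ≫ b₂) = 𝟙 X := by
    rw [← Category.assoc]; exact IsIso.hom_inv_id _
  calc (b₃ ≫ b₄) ≫ (b₅ ≫ inv (b₄ ≫ b₅)) ≫ b₂ ≫ inv (b₃ ≫ b₂)
      = b₃ ≫ (b₄ ≫ b₅ ≫ inv (b₄ ≫ b₅)) ≫ b₂ ≫ inv (b₃ ≫ b₂) := by
        simp only [Category.assoc]
    _ = 𝟙 X := by rw [e1, Category.id_comp, e2]

end StarExt
section Heart

open ExtStruct

variable {B : Type u} [Category.{v} B] [Preadditive B] [HasFiniteBiproducts B]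
variable {σ : ExtStruct B} {U V : Set B}

lemma sheart_isZero_iff (T : σ.SHeart U V) :
    IsZero T ↔ 𝟙 T.obj = (0 : T.obj ⟶ T.obj) := by
  constructor
  · intro h
    exact congrArg (fun g => g.hom) (h.eq_of_src (𝟙 T) ⟨(0 : T.obj ⟶ T.obj)⟩)
  · intro h
    constructor
    · intro Y
      refine ⟨⟨⟨⟨(0 : T.obj ⟶ Y.obj)⟩⟩, fun f => (InducedCategory.hom_ext ?_ : f = ⟨(0 : T.obj ⟶ Y.obj)⟩)⟩⟩
      calc f.hom = 𝟙 T.obj ≫ f.hom := (Category.id_comp _).symm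
        _ = (0 : T.obj ⟶ T.obj) ≫ f.hom := by rw [h]
        _ = 0 := Limits.zero_comp
    · intro Y
      refine ⟨⟨⟨⟨(0 : Y.obj ⟶ T.obj)⟩⟩, fun f => (InducedCategory.hom_ext ?_ : f = ⟨(0 : Y.obj ⟶ T.obj)⟩)⟩⟩
      calc f.hom = f.hom ≫ 𝟙 T.obj := (Category.comp_id _).symm
        _ = f.hom ≫ (0 : T.obj ⟶ T.obj) := by rw [h]
        _ = 0 := Limits.comp_zero

lemma isZero_H_iff (cp : σ.IsCotorsionPair U V) (hd : σ.HeartFunctorData U V) {X : B}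
    (R : ReflSeq σ U V X) :
    IsZero (hd.H.obj X) ↔
      ∀ N : B, N ∈ σ.sNeg U V → ∀ f : N ⟶ R.Z, f ∈ wIdeal (U ∩ V : Set B) N R.Z := by
  have qsurj : ∀ (Y : QuotCat (U ∩ V : Set B)), Y.as ∈ σ.sPos U V →
      ∀ F : (toQuot (U ∩ V : Set B)).obj X ⟶ Y,
      ∃ G : (toQuot (U ∩ V : Set B)).obj R.Z ⟶ Y,
        (toQuot (U ∩ V : Set B)).map R.z ≫ G = F := by
    intro Y hY F
    obtain ⟨f, hf⟩ := quot_hom_surj (W' := (U ∩ V : Set B)) (X := X) (Y := Y.as) F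
    obtain ⟨g, hg⟩ := R.lift cp hY f
    exact ⟨(toQuot _).map g, by rw [← Functor.map_comp, hg, hf]⟩
  have qinj : ∀ (Y : QuotCat (U ∩ V : Set B)), Y.as ∈ σ.sPos U V →
      ∀ G G' : (toQuot (U ∩ V : Set B)).obj R.Z ⟶ Y,
      (toQuot (U ∩ V : Set B)).map R.z ≫ G = (toQuot (U ∩ V : Set B)).map R.z ≫ G' →
        G = G' := by
    intro Y hY G G' hGG
    obtain ⟨g, rfl⟩ := quot_hom_surj (W' := (U ∩ V : Set B)) (X := R.Z) (Y := Y.as) G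
    obtain ⟨g', rfl⟩ := quot_hom_surj (W' := (U ∩ V : Set B)) (X := R.Z) (Y := Y.as) G'
    rw [← Functor.map_comp, ← Functor.map_comp, Quotient.functor_map_eq_iff] at hGG
    rw [Quotient.functor_map_eq_iff]
    show g - g' ∈ wIdeal (U ∩ V : Set B) R.Z Y.as
    refine R.desc_mem cp hY (g - g') ?_
    have : R.z ≫ g - R.z ≫ g' ∈ wIdeal (U ∩ V : Set B) X Y.as := hGG
    rwa [← Preadditive.comp_sub] at this
  obtain ⟨φ, hφ0⟩ := (hd.refl.bij ((toQuot (U ∩ V : Set B)).obj X)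
    ((toQuot (U ∩ V : Set B)).obj R.Z) R.hZpos).2 ((toQuot (U ∩ V : Set B)).map R.z)
  have hφ : hd.refl.unit.app ((toQuot (U ∩ V : Set B)).obj X) ≫ φ =
      (toQuot (U ∩ V : Set B)).map R.z := hφ0
  obtain ⟨ψ, hψ⟩ := qsurj (hd.refl.σp.obj ((toQuot (U ∩ V : Set B)).obj X))
    (hd.refl.mem _) (hd.refl.unit.app ((toQuot (U ∩ V : Set B)).obj X))
  have hφψ : φ ≫ ψ = 𝟙 _ := by
    refine (hd.refl.bij _ _ (hd.refl.mem _)).1 ?_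
    show hd.refl.unit.app _ ≫ (φ ≫ ψ) = hd.refl.unit.app _ ≫ 𝟙 _
    rw [← Category.assoc, hφ, hψ, Category.comp_id]
    
  have hψφ : ψ ≫ φ = 𝟙 _ := by
    refine qinj _ R.hZpos _ _ ?_
    rw [← Category.assoc, hψ, hφ, Category.comp_id]
  constructor
  · intro h0 N hN f
    have h1 : 𝟙 ((hd.H ⋙ σ.sHeartIncl U V).obj X) = 0 := (sheart_isZero_iff _).1 h0
    have hidT : 𝟙 (hd.corefl.σm.obj (hd.refl.σp.obj ((toQuot (U ∩ V : Set B)).obj X))) = 0 := by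
      have h2 := congrArg
        (fun q : (hd.H ⋙ σ.sHeartIncl U V).obj X ⟶ (hd.H ⋙ σ.sHeartIncl U V).obj X =>
          (hd.iso.app X).inv ≫ q ≫ (hd.iso.app X).hom) h1
      simp only [Category.id_comp, Iso.inv_hom_id, Limits.zero_comp, Limits.comp_zero] at h2
      exact h2
    have hε : hd.corefl.counit.app (hd.refl.σp.obj ((toQuot (U ∩ V : Set B)).obj X)) = 0 := by
      calc hd.corefl.counit.app _ = 𝟙 _ ≫ hd.corefl.counit.app _ := (Category.id_comp _).symm
        _ = 0 := by rw [hidT, Limits.zero_comp]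
    rw [← quot_map_eq_zero_iff]
    obtain ⟨G, hG0⟩ := (hd.corefl.bij ((toQuot (U ∩ V : Set B)).obj N) _ hN).2
      ((toQuot (U ∩ V : Set B)).map f ≫ ψ)
    have hG : G ≫ hd.corefl.counit.app _ = (toQuot (U ∩ V : Set B)).map f ≫ ψ := hG0
    have h2 : (toQuot (U ∩ V : Set B)).map f ≫ ψ = 0 := by
      rw [← hG, hε, Limits.comp_zero]
    calc (toQuot (U ∩ V : Set B)).map f
        = ((toQuot (U ∩ V : Set B)).map f ≫ ψ) ≫ φ := by
          rw [Category.assoc, hψφ, Category.comp_id]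
      _ = 0 := by rw [h2, Limits.zero_comp]
  · intro hvan
    have hT : (hd.corefl.σm.obj (hd.refl.σp.obj ((toQuot (U ∩ V : Set B)).obj X))).as
        ∈ σ.sNeg U V := hd.corefl.mem _
    obtain ⟨e₀, he₀⟩ := quot_hom_surj (W' := (U ∩ V : Set B))
      (X := (hd.corefl.σm.obj (hd.refl.σp.obj ((toQuot (U ∩ V : Set B)).obj X))).as)
      (Y := R.Z) (hd.corefl.counit.app _ ≫ φ)
    have h1 : (toQuot (U ∩ V : Set B)).map e₀ = 0 :=
      (quot_map_eq_zero_iff _).2 (hvan _ hT e₀)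
    have h2 : hd.corefl.counit.app _ ≫ φ = 0 := by rw [← he₀, h1]
    have hε : hd.corefl.counit.app (hd.refl.σp.obj ((toQuot (U ∩ V : Set B)).obj X)) = 0 := by
      calc hd.corefl.counit.app _
          = (hd.corefl.counit.app _ ≫ φ) ≫ ψ := by
            rw [Category.assoc, hφψ]; exact (Category.comp_id _).symm
        _ = 0 := by rw [h2, Limits.zero_comp]
    have hidT : 𝟙 (hd.corefl.σm.obj (hd.refl.σp.obj ((toQuot (U ∩ V : Set B)).obj X))) = 0 := by
      refine (hd.corefl.bij _ _ hT).1 ?_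
      show 𝟙 _ ≫ hd.corefl.counit.app _ = (0 : _) ≫ hd.corefl.counit.app _
      rw [Category.id_comp, hε, Limits.zero_comp]
    refine (sheart_isZero_iff _).2 ?_
    have hidT' : 𝟙 ((toQuot (U ∩ V : Set B) ⋙ hd.refl.σp ⋙ hd.corefl.σm).obj X) = 0 := hidT
    have h2 := congrArg
      (fun q : (toQuot (U ∩ V : Set B) ⋙ hd.refl.σp ⋙ hd.corefl.σm).obj X ⟶
          (toQuot (U ∩ V : Set B) ⋙ hd.refl.σp ⋙ hd.corefl.σm).obj X =>
        (hd.iso.app X).hom ≫ q ≫ (hd.iso.app X).inv) hidT'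
    simp only [Category.id_comp, Iso.hom_inv_id, Limits.zero_comp, Limits.comp_zero] at h2
    exact h2

end Heart
/-- Corollary 3.8 / `8.14`. Let `(U,V)` be a cotorsion pair with
associated cohomological functor `H : B ⟶ H̄`.  For any object `X ∈ B`, `H(X) = 0` if and
only if `X ∈ add(U ∗ V)`.  In particular, `add(U ∗ V)` is extension-closed in `B`. -/
theorem statement_11 {B : Type u} [Category.{v} B] [Preadditive B] [HasFiniteBiproducts B]
    (σ : ExtStruct B) {U V : Set B} (cp : σ.IsCotorsionPair U V)
    (hd : σ.HeartFunctorData U V) :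
    (∀ X : B, IsZero (hd.H.obj X) ↔ X ∈ σ.addStar U V) ∧
    (∀ ⦃A X C : B⦄ (f : A ⟶ X) (g : X ⟶ C), σ.Conflation f g →
      A ∈ σ.addStar U V → C ∈ σ.addStar U V → X ∈ σ.addStar U V) := by
  constructor
  · intro X
    constructor
    · intro h0
      obtain ⟨R⟩ := exists_reflSeq cp X
      obtain ⟨R'⟩ := exists_coreflSeq cp R.Z
      have hvan := (isZero_H_iff cp hd R).1 h0
      have hid : 𝟙 R'.Z' ∈ wIdeal (U ∩ V : Set B) R'.Z' R'.Z' := by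
        refine R'.inj_mem cp R'.hneg (𝟙 R'.Z') ?_
        rw [Category.id_comp]
        exact hvan R'.Z' R'.hneg R'.d
      have hZ'W : R'.Z' ∈ (U ∩ V : Set B) := memW_of_id_wIdeal (ExtStruct.W_addClosed cp) hid
      have hZV : R.Z ∈ V := by
        refine ExtStruct.memV_of_vanish cp (fun U₀ hU₀ τ => ?_)
        obtain ⟨μ, hμ⟩ := R'.surj hU₀ τ
        rw [← hμ, cp.ext_vanish hU₀ hZ'W.2 μ, ExtStruct.push_zero_ext]
      exact mem_addStar_of_reflSeq_V cp R hZV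
    · intro hX
      obtain ⟨X₁, hX₁, s, r, hsr⟩ := hX
      obtain ⟨R, hRV⟩ := reflSeq_of_star cp hX₁
      have h1 : IsZero (hd.H.obj X₁) := (isZero_H_iff cp hd R).2
        (fun N hN f => hom_vanish_into_V cp hRV hN f)
      have hcomp : 𝟙 (hd.H.obj X) = hd.H.map s ≫ hd.H.map r := by
        rw [← Functor.map_comp, hsr, CategoryTheory.Functor.map_id]
      refine ⟨fun Y => ⟨⟨⟨hd.H.map s ≫ h1.to_ Y⟩, fun f => ?_⟩⟩,
        fun Y => ⟨⟨⟨h1.from_ Y ≫ hd.H.map r⟩, fun f => ?_⟩⟩⟩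
      · calc f = 𝟙 (hd.H.obj X) ≫ f := (Category.id_comp f).symm
          _ = (hd.H.map s ≫ hd.H.map r) ≫ f := by rw [hcomp]
          _ = hd.H.map s ≫ (hd.H.map r ≫ f) := Category.assoc _ _ _
          _ = hd.H.map s ≫ h1.to_ Y := by
              rw [h1.eq_of_src (hd.H.map r ≫ f) (h1.to_ Y)]
      · calc f = f ≫ 𝟙 (hd.H.obj X) := (Category.comp_id f).symm
          _ = f ≫ hd.H.map s ≫ hd.H.map r := by rw [hcomp]
          _ = (f ≫ hd.H.map s) ≫ hd.H.map r := (Category.assoc _ _ _).symm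
          _ = h1.from_ Y ≫ hd.H.map r := by
              rw [h1.eq_of_tgt (f ≫ hd.H.map s) (h1.from_ Y)]
  · intro A X C f g hconf hA hC
    exact addStar_ext_closed cp f g hconf hA hC

end ExtriHearts
end
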